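/- Assume f = (f_1,…,f_d) of class C² is a solution to the unconstrained auxiliary system, i.e. div[𝒜_i(y,∇f)∇f_i] = 0 in 𝔸ₙ for 1 ≤ i ≤ d. Then the whirl map u associated with the matrix field Q = Q[f] satisfies 𝓛[u;A,B] = ∇A + Bx − Σ_{i=1}^d A|∇f_i|² w^i, with A, B and their arguments evaluated at (r,s,ξ) = (‖y‖, ‖y‖², n + Σ_{j=1}^d y_j²|∇f_j|²). -/

import Mathlib

open scoped BigOperators
open Matrix

noncomputable section

/-- Partial derivative `∂g/∂x_j` of a scalar field on `ℝᵐ`. -/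
def pdx {m : ℕ} (g : (Fin m → ℝ) → ℝ) (x : Fin m → ℝ) (j : Fin m) : ℝ :=
  fderiv ℝ g x (Pi.single j 1)

/-- Gradient of a scalar field on `ℝᵐ`. -/
def gradx {m : ℕ} (g : (Fin m → ℝ) → ℝ) (x : Fin m → ℝ) : Fin m → ℝ :=
  fun j => pdx g x j

/-- Gradient matrix `∇u`, with entries `(∇u)_{ij} = ∂u_i/∂x_j`. -/
def gradm {n : ℕ} (u : (Fin n → ℝ) → Fin n → ℝ) (x : Fin n → ℝ) :
    Matrix (Fin n) (Fin n) ℝ :=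
  Matrix.of fun i j => pdx (fun z => u z i) x j

/-- Laplacian of a scalar field. -/
def lapx {m : ℕ} (g : (Fin m → ℝ) → ℝ) (x : Fin m → ℝ) : ℝ :=
  ∑ j, pdx (fun z => pdx g z j) x j

/-- Hessian matrix of a scalar field. -/
def hessx {m : ℕ} (g : (Fin m → ℝ) → ℝ) (x : Fin m → ℝ) : Matrix (Fin m) (Fin m) ℝ :=
  Matrix.of fun i j => pdx (fun z => pdx g z j) x i

/-- Componentwise Laplacian of a vector field. -/
def lapv {n : ℕ} (u : (Fin n → ℝ) → Fin n → ℝ) (x : Fin n → ℝ) : Fin n → ℝ :=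
  fun i => lapx (fun z => u z i) x

/-- Squared Euclidean norm of a vector. -/
def norm2 {m : ℕ} (v : Fin m → ℝ) : ℝ := ∑ i, v i ^ 2

/-- Euclidean norm of a vector. -/
def enr {m : ℕ} (v : Fin m → ℝ) : ℝ := Real.sqrt (norm2 v)

/-- Squared Frobenius norm of a matrix, `|E|² = tr (EᵗE)`. -/
def frob2 {n : ℕ} (M : Matrix (Fin n) (Fin n) ℝ) : ℝ := ∑ i, ∑ j, M i j ^ 2

/-- The 2-plane radial variables `y = (y_1, …, y_N)`, `N = ⌈n/2⌉` (0-indexed):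
`y_ℓ = √(x_{2ℓ}² + x_{2ℓ+1}²)` and, when `n` is odd, `y_{N-1} = x_{n-1}`. -/
def yvar {n : ℕ} (x : Fin n → ℝ) (ℓ : Fin ((n+1)/2)) : ℝ :=
  if h : 2 * (ℓ : ℕ) + 1 < n then
    Real.sqrt (x ⟨2*(ℓ:ℕ), by omega⟩ ^ 2 + x ⟨2*(ℓ:ℕ)+1, h⟩ ^ 2)
  else x ⟨n - 1, by have := ℓ.isLt; omega⟩

/-- The vector of 2-plane radial variables of `x`. -/
def yv {n : ℕ} (x : Fin n → ℝ) : Fin ((n+1)/2) → ℝ := fun ℓ => yvar x ℓ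

/-- Inclusion `Fin (n/2) → Fin ((n+1)/2)`, i.e. `d = ⌊n/2⌋` into `N = ⌈n/2⌉`. -/
def dIdx {n : ℕ} (i : Fin (n/2)) : Fin ((n+1)/2) := ⟨(i:ℕ), by have := i.isLt; omega⟩

/-- Partial derivative `∂_ℓ M` of a matrix field on `ℝᴺ`. -/
def pdM {n N : ℕ} (M : (Fin N → ℝ) → Matrix (Fin n) (Fin n) ℝ)
    (y : Fin N → ℝ) (ℓ : Fin N) : Matrix (Fin n) (Fin n) ℝ :=
  Matrix.of fun i j => pdx (fun z => M z i j) y ℓ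

/-- Second partial derivative `∂²_{ℓk} M` of a matrix field on `ℝᴺ`. -/
def pdM2 {n N : ℕ} (M : (Fin N → ℝ) → Matrix (Fin n) (Fin n) ℝ)
    (y : Fin N → ℝ) (ℓ k : Fin N) : Matrix (Fin n) (Fin n) ℝ :=
  Matrix.of fun i j => pdx (fun z => pdM M z ℓ i j) y k

/-- The block diagonal `SO(n)`-valued matrix field `Q[f]`, with `2×2` rotation blocks
`R[f_ℓ(y)]` (and an extra diagonal `1` when `n` is odd). -/
def Qf {n : ℕ} (f : (Fin ((n+1)/2) → ℝ) → Fin (n/2) → ℝ)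
    (y : Fin ((n+1)/2) → ℝ) : Matrix (Fin n) (Fin n) ℝ :=
  Matrix.of fun i j =>
    if h : (i:ℕ)/2 = (j:ℕ)/2 ∧ (i:ℕ)/2 < n/2 then
      (if (i:ℕ) % 2 = 0 then
        (if (j:ℕ) % 2 = 0 then Real.cos (f y ⟨(i:ℕ)/2, h.2⟩)
         else -Real.sin (f y ⟨(i:ℕ)/2, h.2⟩))
       else
        (if (j:ℕ) % 2 = 0 then Real.sin (f y ⟨(i:ℕ)/2, h.2⟩)
         else Real.cos (f y ⟨(i:ℕ)/2, h.2⟩)))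
    else (if i = j then 1 else 0)

/-- The block diagonal rotation matrix `exp(α𝐇) = diag(R[α], …, R[α])`
(an extra diagonal `1` when `n` is odd). -/
def rotM (n : ℕ) (α : ℝ) : Matrix (Fin n) (Fin n) ℝ :=
  Matrix.of fun i j =>
    if (i:ℕ)/2 = (j:ℕ)/2 ∧ (i:ℕ)/2 < n/2 then
      (if (i:ℕ) % 2 = 0 then
        (if (j:ℕ) % 2 = 0 then Real.cos α else -Real.sin α)
       else
        (if (j:ℕ) % 2 = 0 then Real.sin α else Real.cos α))
    else (if i = j then 1 else 0)

/-- The vector `w^k = (0, …, 0, x_{2k}, x_{2k+1}, 0, …, 0)`. -/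
def wv {n : ℕ} (x : Fin n → ℝ) (k : Fin ((n+1)/2)) : Fin n → ℝ :=
  fun j => if (j:ℕ)/2 = (k:ℕ) then x j else 0

/-- The vector `[w^k]^⊥ = (0, …, 0, -x_{2k+1}, x_{2k}, 0, …, 0)` (zero in the odd last slot). -/
def wperp {n : ℕ} (x : Fin n → ℝ) (k : Fin ((n+1)/2)) : Fin n → ℝ :=
  fun j =>
    if h : (j:ℕ)/2 = (k:ℕ) ∧ 2*(k:ℕ)+1 < n then
      (if (j:ℕ) % 2 = 0 then -x ⟨2*(k:ℕ)+1, h.2⟩ else x ⟨2*(k:ℕ), by omega⟩)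
    else 0

/-- The differential operator
`𝓛[u;A,B] = [∇u]ᵗ[∇u]∇A + A [∇u]ᵗΔu + B [∇u]ᵗu`, where `A, B` are evaluated at
`(|x|, |u|², |∇u|²)` and `∇A` is the spatial gradient of `x ↦ A(|x|,|u(x)|²,|∇u(x)|²)`. -/
def LAB {n : ℕ} (A B : ℝ → ℝ → ℝ → ℝ) (u : (Fin n → ℝ) → Fin n → ℝ)
    (x : Fin n → ℝ) : Fin n → ℝ :=
  ((gradm u x)ᵀ * gradm u x) *ᵥ
      gradx (fun z => A (enr z) (norm2 (u z)) (frob2 (gradm u z))) x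
    + A (enr x) (norm2 (u x)) (frob2 (gradm u x)) • ((gradm u x)ᵀ *ᵥ lapv u x)
    + B (enr x) (norm2 (u x)) (frob2 (gradm u x)) • ((gradm u x)ᵀ *ᵥ u x)

/-- The annulus `𝕏ₙ = {x : a < |x| < b}` in `ℝⁿ`. -/
def Xann (n : ℕ) (a b : ℝ) : Set (Fin n → ℝ) := {x | a < enr x ∧ enr x < b}

/-- The region `𝔸ₙ = {y : a < ‖y‖ < b}` (with the 2-plane radial coordinates positive). -/
def Ann (n : ℕ) (a b : ℝ) : Set (Fin ((n+1)/2) → ℝ) :=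
  {y | a < enr y ∧ enr y < b ∧ ∀ ℓ : Fin ((n+1)/2), 2*(ℓ:ℕ)+1 < n → 0 < y ℓ}

/-- `𝒥(y) = y_1 ⋯ y_d`. -/
def Jac (n : ℕ) (y : Fin ((n+1)/2) → ℝ) : ℝ :=
  ∏ ℓ : Fin ((n+1)/2), if 2*(ℓ:ℕ)+1 < n then y ℓ else 1

/-- The argument `ξ = n + Σ_j y_j² |∇f_j|²`. -/
def xiArg (n : ℕ) (f : (Fin ((n+1)/2) → ℝ) → Fin (n/2) → ℝ)
    (y : Fin ((n+1)/2) → ℝ) : ℝ :=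
  (n : ℝ) + ∑ j : Fin (n/2), (y (dIdx j))^2 * norm2 (gradx (fun z => f z j) y)

/-- The coefficients `𝒜_i(y,∇f) = y_i² A(z, z², n + Σ_j y_j²|∇f_j|²) 𝒥(y)`, `z = ‖y‖`. -/
def coefA (n : ℕ) (A : ℝ → ℝ → ℝ → ℝ) (f : (Fin ((n+1)/2) → ℝ) → Fin (n/2) → ℝ)
    (i : Fin (n/2)) (y : Fin ((n+1)/2) → ℝ) : ℝ :=
  (y (dIdx i))^2 * A (enr y) ((enr y)^2) (xiArg n f y) * Jac n y

/-- `div [𝒜_i(y,∇f) ∇f_i]`, divergence taken in the `y` variables. -/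
def divA (n : ℕ) (A : ℝ → ℝ → ℝ → ℝ) (f : (Fin ((n+1)/2) → ℝ) → Fin (n/2) → ℝ)
    (i : Fin (n/2)) (y : Fin ((n+1)/2) → ℝ) : ℝ :=
  ∑ k, pdx (fun z => coefA n A f i z * pdx (fun w => f w i) z k) y k

/-- The curl of a vector field, `[curl U]_{ij} = ∂_j U_i − ∂_i U_j`. -/
def curlm {n : ℕ} (U : (Fin n → ℝ) → Fin n → ℝ) (x : Fin n → ℝ) :
    Matrix (Fin n) (Fin n) ℝ :=
  Matrix.of fun i j => pdx (fun z => U z i) x j - pdx (fun z => U z j) x i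

end


noncomputable section Infra

/-- linear functional with coefficient vector `c`. -/
def lc {m : ℕ} (c : Fin m → ℝ) : (Fin m → ℝ) →L[ℝ] ℝ :=
  ∑ k, c k • (ContinuousLinearMap.proj k : ((Fin m → ℝ)) →L[ℝ] ℝ)

lemma lc_apply {m : ℕ} (c v : Fin m → ℝ) : lc c v = ∑ k, c k * v k := by
  simp [lc]

lemma lc_single {m : ℕ} (c : Fin m → ℝ) (j : Fin m) : lc c (Pi.single j 1) = c j := by
  rw [lc_apply, Finset.sum_eq_single j]
  · simp
  · intro k _ hk; simp [Pi.single_apply, hk.symm]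
  · simp

lemma lc_canon {m : ℕ} (L : (Fin m → ℝ) →L[ℝ] ℝ) : L = lc (fun k => L (Pi.single k 1)) := by
  ext v
  have hv : v = ∑ k, v k • (Pi.single k (1:ℝ) : Fin m → ℝ) := by
    funext j
    rw [Fintype.sum_apply]
    rw [Finset.sum_eq_single j]
    · simp
    · intro k _ hk; simp [Pi.single_apply, hk.symm]
    · simp
  conv_lhs => rw [hv]
  rw [map_sum, lc_apply]
  exact Finset.sum_congr rfl fun k _ => by
    rw [L.map_smul]; simp [mul_comm]

lemma hasFDerivAt_lc {m : ℕ} {g : (Fin m → ℝ) → ℝ} {L : (Fin m → ℝ) →L[ℝ] ℝ} {x : Fin m → ℝ}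
    (h : HasFDerivAt g L x) : HasFDerivAt g (lc (fun k => L (Pi.single k 1))) x := by
  rwa [← lc_canon]

lemma pdx_of_hasFDerivAt {m : ℕ} {g : (Fin m → ℝ) → ℝ} {c : Fin m → ℝ} {x : Fin m → ℝ}
    (h : HasFDerivAt g (lc c) x) (j : Fin m) : pdx g x j = c j := by
  rw [pdx, h.fderiv, lc_single]

lemma lc_congr {m : ℕ} {c c' : Fin m → ℝ} (h : ∀ k, c k = c' k) : lc c = lc c' := by
  have : c = c' := funext h; rw [this]

lemma hder_add {m : ℕ} {φ ψ : (Fin m → ℝ) → ℝ} {c c' : Fin m → ℝ} {x : Fin m → ℝ}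
    (h : HasFDerivAt φ (lc c) x) (h' : HasFDerivAt ψ (lc c') x) :
    HasFDerivAt (fun z => φ z + ψ z) (lc (fun k => c k + c' k)) x := by
  have := h.add h'
  refine this.congr_fderiv ?_; symm
  ext v; simp [lc_apply, add_mul, Finset.sum_add_distrib]

lemma hder_sub {m : ℕ} {φ ψ : (Fin m → ℝ) → ℝ} {c c' : Fin m → ℝ} {x : Fin m → ℝ}
    (h : HasFDerivAt φ (lc c) x) (h' : HasFDerivAt ψ (lc c') x) :
    HasFDerivAt (fun z => φ z - ψ z) (lc (fun k => c k - c' k)) x := by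
  have := h.sub h'
  refine this.congr_fderiv ?_; symm
  ext v; simp [lc_apply, sub_mul, Finset.sum_sub_distrib]

lemma hder_mul {m : ℕ} {φ ψ : (Fin m → ℝ) → ℝ} {c c' : Fin m → ℝ} {x : Fin m → ℝ}
    (h : HasFDerivAt φ (lc c) x) (h' : HasFDerivAt ψ (lc c') x) :
    HasFDerivAt (fun z => φ z * ψ z) (lc (fun k => φ x * c' k + ψ x * c k)) x := by
  have := h.mul h'
  refine this.congr_fderiv ?_; symm
  ext v; simp [lc_apply, add_mul, Finset.sum_add_distrib, Finset.mul_sum, mul_assoc]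

lemma hder_const {m : ℕ} (r : ℝ) (x : Fin m → ℝ) :
    HasFDerivAt (fun _ => r) (lc (fun _ => (0:ℝ))) x := by
  have h0 : lc (fun _ : Fin m => (0:ℝ)) = 0 := by simp [lc]
  rw [h0]
  exact hasFDerivAt_const r x

lemma hder_const_mul {m : ℕ} {φ : (Fin m → ℝ) → ℝ} {c : Fin m → ℝ} {x : Fin m → ℝ} (r : ℝ)
    (h : HasFDerivAt φ (lc c) x) :
    HasFDerivAt (fun z => r * φ z) (lc (fun k => r * c k)) x := by
  have := (hder_mul (hder_const r x) h)
  convert this using 1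
  exact lc_congr fun k => by ring

lemma hder_neg {m : ℕ} {φ : (Fin m → ℝ) → ℝ} {c : Fin m → ℝ} {x : Fin m → ℝ}
    (h : HasFDerivAt φ (lc c) x) :
    HasFDerivAt (fun z => -φ z) (lc (fun k => -(c k))) x := by
  have := hder_const_mul (-1) h
  convert this using 1 <;> [funext z; exact lc_congr fun k => by ring] <;> ring

lemma hder_sum {m : ℕ} {ι : Type*} (s : Finset ι) {φ : ι → (Fin m → ℝ) → ℝ}
    {c : ι → Fin m → ℝ} {x : Fin m → ℝ}
    (h : ∀ i ∈ s, HasFDerivAt (φ i) (lc (c i)) x) :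
    HasFDerivAt (fun z => ∑ i ∈ s, φ i z) (lc (fun k => ∑ i ∈ s, c i k)) x := by
  have := HasFDerivAt.fun_sum h
  refine this.congr_fderiv ?_; symm
  ext v; simp [lc_apply, Finset.sum_mul]
  rw [Finset.sum_comm]

lemma hder_proj {m : ℕ} (j : Fin m) (x : Fin m → ℝ) :
    HasFDerivAt (fun z : Fin m → ℝ => z j)
      (lc (fun k => if k = j then (1:ℝ) else 0)) x := by
  have : HasFDerivAt (fun z : Fin m → ℝ => z j)
      (ContinuousLinearMap.proj j : ((Fin m → ℝ)) →L[ℝ] ℝ) x :=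
    (ContinuousLinearMap.proj j : ((Fin m → ℝ)) →L[ℝ] ℝ).hasFDerivAt
  have h2 := hasFDerivAt_lc this
  convert h2 using 1
  exact lc_congr fun k => by simp [Pi.single_apply, eq_comm]

/-- scalar chain rule: postcompose with 1d function. -/
lemma hder_comp1 {m : ℕ} {φ : (Fin m → ℝ) → ℝ} {c : Fin m → ℝ} {x : Fin m → ℝ}
    {ψ : ℝ → ℝ} {d : ℝ} (hψ : HasDerivAt ψ d (φ x))
    (h : HasFDerivAt φ (lc c) x) :
    HasFDerivAt (fun z => ψ (φ z)) (lc (fun k => d * c k)) x := by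
  have := hψ.comp_hasFDerivAt x h
  refine this.congr_fderiv ?_; symm
  ext v; simp [lc_apply, Finset.mul_sum, mul_assoc]

end Infra


noncomputable section Blocks

/-- left index of block `ℓ`. -/
def tI {n : ℕ} (ℓ : Fin (n/2)) : Fin n := ⟨2*(ℓ:ℕ), by have := ℓ.isLt; omega⟩
/-- right index of block `ℓ`. -/
def tJ {n : ℕ} (ℓ : Fin (n/2)) : Fin n := ⟨2*(ℓ:ℕ)+1, by have := ℓ.isLt; omega⟩

lemma tI_lt {n : ℕ} (ℓ : Fin (n/2)) : 2*(ℓ:ℕ)+1 < n := by have := ℓ.isLt; omega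

variable {M : Type*} [AddCommMonoid M]

lemma sum_range_two_mul (g : ℕ → M) (m : ℕ) :
    ∑ j ∈ Finset.range (2*m), g j = ∑ ℓ ∈ Finset.range m, (g (2*ℓ) + g (2*ℓ+1)) := by
  induction m with
  | zero => simp
  | succ m ih =>
      have h2 : 2*(m+1) = 2*m+1+1 := by ring
      rw [h2, Finset.sum_range_succ, Finset.sum_range_succ, ih, Finset.sum_range_succ]
      rw [add_assoc]

lemma sum_range_split (g : ℕ → M) (n : ℕ) :
    ∑ j ∈ Finset.range n, g j
      = (∑ ℓ ∈ Finset.range (n/2), (g (2*ℓ) + g (2*ℓ+1)))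
        + (if n % 2 = 1 then g (n-1) else 0) := by
  rcases Nat.even_or_odd n with ⟨m, hm⟩ | ⟨m, hm⟩
  · have h1 : n = 2*m := by omega
    have h2 : n/2 = m := by omega
    have h3 : n % 2 = 0 := by omega
    have h2' : 2*m/2 = m := by omega
    have h3' : ¬(2*m % 2 = 1) := by omega
    rw [h1, sum_range_two_mul, h2', if_neg h3', add_zero]
  · have h1 : n = 2*m+1 := by omega
    have h2 : n/2 = m := by omega
    have h3 : n % 2 = 1 := by omega
    have h2' : (2*m+1)/2 = m := by omega
    have h3' : (2*m+1) % 2 = 1 := by omega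
    rw [h1, Finset.sum_range_succ, sum_range_two_mul, h2', if_pos h3']
    simp

lemma fin_sum_split {n : ℕ} (h : Fin n → M) :
    ∑ j, h j = (∑ ℓ : Fin (n/2), (h (tI ℓ) + h (tJ ℓ)))
      + (if hh : n % 2 = 1 then h ⟨n-1, by omega⟩ else 0) := by
  classical
  set g : ℕ → M := fun j => if hj : j < n then h ⟨j, hj⟩ else 0 with hg
  have e1 : ∑ j, h j = ∑ j ∈ Finset.range n, g j := by
    rw [← Fin.sum_univ_eq_sum_range]
    exact Finset.sum_congr rfl fun j _ => by simp [hg, j.isLt]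
  have e2 : ∀ ℓ : Fin (n/2), g (2*(ℓ:ℕ)) + g (2*(ℓ:ℕ)+1) = h (tI ℓ) + h (tJ ℓ) := by
    intro ℓ
    have h1 : 2*(ℓ:ℕ) < n := by have := ℓ.isLt; omega
    have h2 : 2*(ℓ:ℕ)+1 < n := by have := ℓ.isLt; omega
    simp [hg, h1, h2, tI, tJ]
  have e3 : ∑ ℓ ∈ Finset.range (n/2), (g (2*ℓ) + g (2*ℓ+1))
      = ∑ ℓ : Fin (n/2), (h (tI ℓ) + h (tJ ℓ)) := by
    rw [← Fin.sum_univ_eq_sum_range (fun ℓ => g (2*ℓ) + g (2*ℓ+1)) (n/2)]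
    exact Finset.sum_congr rfl fun ℓ _ => e2 ℓ
  rw [e1, sum_range_split, e3]
  congr 1
  by_cases hh : n % 2 = 1
  · rw [if_pos hh, dif_pos hh]
    have h1 : n - 1 < n := by omega
    simp [hg, h1]
  · rw [if_neg hh, dif_neg hh]

lemma finN_sum_split {n : ℕ} (φ : Fin ((n+1)/2) → M) :
    ∑ m, φ m = (∑ ℓ : Fin (n/2), φ (dIdx ℓ))
      + (if hh : n % 2 = 1 then φ ⟨n/2, by omega⟩ else 0) := by
  classical
  set g : ℕ → M := fun j => if hj : j < (n+1)/2 then φ ⟨j, hj⟩ else 0 with hg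
  have e1 : ∑ m, φ m = ∑ j ∈ Finset.range ((n+1)/2), g j := by
    rw [← Fin.sum_univ_eq_sum_range]
    exact Finset.sum_congr rfl fun j _ => by simp [hg, j.isLt]
  have e3 : ∑ ℓ ∈ Finset.range (n/2), g ℓ = ∑ ℓ : Fin (n/2), φ (dIdx ℓ) := by
    rw [← Fin.sum_univ_eq_sum_range (fun ℓ => g ℓ) (n/2)]
    refine Finset.sum_congr rfl fun ℓ _ => ?_
    have h1 : (ℓ:ℕ) < (n+1)/2 := by have := ℓ.isLt; omega
    simp [hg, h1, dIdx]
  by_cases hh : n % 2 = 1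
  · have hN : (n+1)/2 = n/2 + 1 := by omega
    rw [e1, show Finset.range ((n+1)/2) = Finset.range (n/2+1) from by rw [hN],
      Finset.sum_range_succ, e3, dif_pos hh]
    congr 1
    have h1 : n/2 < (n+1)/2 := by omega
    simp [hg, h1]
  · have hN : (n+1)/2 = n/2 := by omega
    rw [e1, show Finset.range ((n+1)/2) = Finset.range (n/2) from by rw [hN], e3, dif_neg hh]
    simp

end Blocks


noncomputable section Geom
variable {n : ℕ}

/-- frame coefficients: `EE x m k = ∂ y_m / ∂ x_k`. -/
def EE (x : Fin n → ℝ) (m : Fin ((n+1)/2)) (k : Fin n) : ℝ :=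
  if 2*(m:ℕ)+1 < n then
    (if (k:ℕ) = 2*(m:ℕ) ∨ (k:ℕ) = 2*(m:ℕ)+1 then x k / yvar x m else 0)
  else (if (k:ℕ) = n-1 then 1 else 0)

lemma yvar_true {x : Fin n → ℝ} {m : Fin ((n+1)/2)} (h : 2*(m:ℕ)+1 < n) :
    yvar x m = Real.sqrt (x ⟨2*(m:ℕ), by omega⟩^2 + x ⟨2*(m:ℕ)+1, h⟩^2) := by
  rw [yvar, dif_pos h]

lemma yvar_odd {x : Fin n → ℝ} {m : Fin ((n+1)/2)} (h : ¬ 2*(m:ℕ)+1 < n) :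
    yvar x m = x ⟨n-1, by have := m.isLt; omega⟩ := by rw [yvar, dif_neg h]

lemma yvar_sq {x : Fin n → ℝ} {m : Fin ((n+1)/2)} (h : 2*(m:ℕ)+1 < n) :
    yvar x m ^ 2 = x ⟨2*(m:ℕ), by omega⟩^2 + x ⟨2*(m:ℕ)+1, h⟩^2 := by
  rw [yvar_true h, Real.sq_sqrt (by positivity)]

lemma odd_case {m : Fin ((n+1)/2)} (h : ¬ 2*(m:ℕ)+1 < n) :
    (m:ℕ) = n/2 ∧ n % 2 = 1 := by
  have := m.isLt; omega

/-- the positivity context we carry around. -/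
def PosCtx (x : Fin n → ℝ) : Prop :=
  ∀ m : Fin ((n+1)/2), 2*(m:ℕ)+1 < n → 0 < yvar x m

lemma posctx_of_ann {a b : ℝ} {x : Fin n → ℝ} (hx : yv x ∈ Ann n a b) : PosCtx x := by
  intro m hm
  exact hx.2.2 m hm

/-- `vecE x c = Σ_m c_m E_m` as a vector in `ℝⁿ`. -/
def vecE (x : Fin n → ℝ) (c : Fin ((n+1)/2) → ℝ) : Fin n → ℝ :=
  fun k => ∑ m, c m * EE x m k

lemma vecE_tI (x : Fin n → ℝ) (c : Fin ((n+1)/2) → ℝ) (ℓ : Fin (n/2)) :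
    vecE x c (tI ℓ) = c (dIdx ℓ) * (x (tI ℓ) / yvar x (dIdx ℓ)) := by
  rw [vecE, Finset.sum_eq_single (dIdx ℓ)]
  · congr 1
    rw [EE, if_pos (by simpa [dIdx] using tI_lt ℓ)]
    rw [if_pos (by simp [tI, dIdx])]
  · intro m _ hm
    have hm' : (m:ℕ) ≠ (ℓ:ℕ) := fun hc => hm (Fin.ext (by simpa [dIdx] using hc))
    rw [EE]
    split_ifs with h1 h2
    · exfalso
      rcases h2 with h2 | h2 <;> simp [tI] at h2 <;> omega
    · ring
    · exfalso
      have := tI_lt ℓ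
      simp [tI] at *
      omega
    · ring
  · simp

lemma vecE_tJ (x : Fin n → ℝ) (c : Fin ((n+1)/2) → ℝ) (ℓ : Fin (n/2)) :
    vecE x c (tJ ℓ) = c (dIdx ℓ) * (x (tJ ℓ) / yvar x (dIdx ℓ)) := by
  rw [vecE, Finset.sum_eq_single (dIdx ℓ)]
  · congr 1
    rw [EE, if_pos (by simpa [dIdx] using tI_lt ℓ)]
    rw [if_pos (by simp [tJ, dIdx])]
  · intro m _ hm
    have hm' : (m:ℕ) ≠ (ℓ:ℕ) := fun hc => hm (Fin.ext (by simpa [dIdx] using hc))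
    rw [EE]
    split_ifs with h1 h2
    · exfalso
      rcases h2 with h2 | h2 <;> simp [tJ] at h2 <;> omega
    · ring
    · exfalso
      have := tI_lt ℓ
      simp [tJ] at *
      omega
    · ring
  · simp

lemma vecE_last (x : Fin n → ℝ) (c : Fin ((n+1)/2) → ℝ) (hodd : n % 2 = 1) :
    vecE x c ⟨n-1, by omega⟩ = c ⟨n/2, by omega⟩ := by
  rw [vecE, Finset.sum_eq_single (⟨n/2, by omega⟩ : Fin ((n+1)/2))]
  · have h1 : ¬ 2*((⟨n/2, by omega⟩ : Fin ((n+1)/2)):ℕ)+1 < n := by simp; omega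
    rw [EE, if_neg h1, if_pos (by simp)]
    ring
  · intro m _ hm
    have hm' : (m:ℕ) ≠ n/2 := fun hc => hm (Fin.ext (by simpa using hc))
    have h1 : 2*(m:ℕ)+1 < n := by have := m.isLt; omega
    rw [EE, if_pos h1, if_neg (by simp; omega)]
    ring
  · simp

lemma vecE_x {x : Fin n → ℝ} (hp : PosCtx x) :
    vecE x (fun m => yvar x m) = x := by
  funext k
  rcases fin_sum_split (M := ℝ) (n := n) with _
  -- evaluate by cases on k
  have hk := k.isLt
  by_cases hkd : (k:ℕ) < 2*(n/2)
  · -- k is in a true block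
    set ℓ : Fin (n/2) := ⟨(k:ℕ)/2, by omega⟩ with hℓ
    have hy := hp (dIdx ℓ) (by simpa [dIdx] using tI_lt ℓ)
    rcases Nat.even_or_odd (k:ℕ) with ⟨t, ht⟩ | ⟨t, ht⟩
    · have hkt : k = tI ℓ := by
        apply Fin.ext; simp [tI, hℓ]; omega
      rw [hkt, vecE_tI]
      field_simp
    · have hkt : k = tJ ℓ := by
        apply Fin.ext; simp [tJ, hℓ]; omega
      rw [hkt, vecE_tJ]
      field_simp
  · -- k = n-1 and n odd
    have hodd : n % 2 = 1 := by omega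
    have hkn : k = ⟨n-1, by omega⟩ := by apply Fin.ext; simp; omega
    rw [hkn, vecE_last x _ hodd]
    rw [yvar_odd (by simp; omega)]

lemma sum_vecE_mul_vecE {x : Fin n → ℝ} (hp : PosCtx x) (c c' : Fin ((n+1)/2) → ℝ) :
    ∑ k, vecE x c k * vecE x c' k = ∑ m, c m * c' m := by
  rw [fin_sum_split (fun k => vecE x c k * vecE x c' k)]
  rw [finN_sum_split (fun m => c m * c' m)]
  congr 1
  · refine Finset.sum_congr rfl fun ℓ _ => ?_
    rw [vecE_tI, vecE_tJ, vecE_tI, vecE_tJ]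
    have hy := hp (dIdx ℓ) (by simpa [dIdx] using tI_lt ℓ)
    have hsq : x (tI ℓ)^2 + x (tJ ℓ)^2 = yvar x (dIdx ℓ)^2 := by
      rw [yvar_sq (m := dIdx ℓ) (by simpa [dIdx] using tI_lt ℓ)]
      congr 2 <;> apply Fin.ext <;> simp [tI, tJ, dIdx]
    field_simp
    linear_combination (c (dIdx ℓ) * c' (dIdx ℓ)) * hsq
  · by_cases hodd : n % 2 = 1
    · rw [dif_pos hodd, dif_pos hodd, vecE_last x c hodd, vecE_last x c' hodd]
    · rw [dif_neg hodd, dif_neg hodd]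

end Geom


noncomputable section Calc1
variable {n : ℕ}

lemma hder_yvar {x : Fin n → ℝ} (hp : PosCtx x) (m : Fin ((n+1)/2)) :
    HasFDerivAt (fun z => yvar z m) (lc (EE x m)) x := by
  by_cases h : 2*(m:ℕ)+1 < n
  · set k1 : Fin n := ⟨2*(m:ℕ), by omega⟩ with hk1
    set k2 : Fin n := ⟨2*(m:ℕ)+1, h⟩ with hk2
    have hEq : (fun z : Fin n → ℝ => yvar z m) = fun z => Real.sqrt (z k1^2 + z k2^2) := by
      funext z; rw [yvar, dif_pos h]
    have hsq1 : HasDerivAt (fun t : ℝ => t^2) (2*x k1) (x k1) := by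
      simpa using hasDerivAt_pow 2 (x k1)
    have hsq2 : HasDerivAt (fun t : ℝ => t^2) (2*x k2) (x k2) := by
      simpa using hasDerivAt_pow 2 (x k2)
    have h1 := hder_comp1 hsq1 (hder_proj k1 x)
    have h2 := hder_comp1 hsq2 (hder_proj k2 x)
    have hφ := hder_add h1 h2
    have hy : 0 < yvar x m := hp m h
    have hS : yvar x m = Real.sqrt (x k1^2 + x k2^2) := yvar_true h
    have hSne : x k1^2 + x k2^2 ≠ 0 := by
      intro hc
      rw [hc] at hS; simp [Real.sqrt_zero] at hS; exact absurd hS (by linarith)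
    have hsqrt : HasDerivAt Real.sqrt (1/(2*Real.sqrt (x k1^2 + x k2^2)))
        (x k1^2 + x k2^2) := Real.hasDerivAt_sqrt hSne
    have htot := hder_comp1 hsqrt hφ
    rw [hEq]
    convert htot using 1
    apply lc_congr; intro k
    rw [EE, if_pos h]
    have hk12 : k1 ≠ k2 := by simp [hk1, hk2, Fin.ext_iff]
    by_cases hc1 : (k:ℕ) = 2*(m:ℕ)
    · have hkk : k = k1 := Fin.ext (by simp [hk1, hc1])
      have hkk2 : k ≠ k2 := by rw [hkk]; exact hk12
      rw [if_pos (Or.inl hc1)]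
      rw [if_pos hkk, if_neg hkk2]
      rw [← hS, hkk]
      field_simp
      ring
    · by_cases hc2 : (k:ℕ) = 2*(m:ℕ)+1
      · have hkk : k = k2 := Fin.ext (by simp [hk2, hc2])
        have hkk1 : k ≠ k1 := by rw [hkk]; exact hk12.symm
        rw [if_pos (Or.inr hc2), if_neg hkk1, if_pos hkk, ← hS, hkk]
        field_simp
        ring
      · have hkk1 : k ≠ k1 := fun hc => hc1 (by rw [hc])
        have hkk2 : k ≠ k2 := fun hc => hc2 (by rw [hc])
        rw [if_neg (by tauto), if_neg hkk1, if_neg hkk2]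
        ring
  · have hEq : (fun z : Fin n → ℝ => yvar z m)
        = fun z => z ⟨n-1, by have := m.isLt; omega⟩ := by
      funext z; rw [yvar_odd h]
    rw [hEq]
    have := hder_proj (⟨n-1, by have := m.isLt; omega⟩ : Fin n) x
    convert this using 1
    apply lc_congr; intro k
    rw [EE, if_neg h]
    congr 1
    simp [Fin.ext_iff]

lemma hder_comp_y {x : Fin n → ℝ} (hp : PosCtx x)
    {φ : (Fin ((n+1)/2) → ℝ) → ℝ} {c : Fin ((n+1)/2) → ℝ}
    (hφ : HasFDerivAt φ (lc c) (yv x)) :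
    HasFDerivAt (fun z => φ (yv z)) (lc (vecE x c)) x := by
  have hyv : HasFDerivAt (fun z (m : Fin ((n+1)/2)) => yvar z m)
      (ContinuousLinearMap.pi (fun m => lc (EE x m))) x :=
    hasFDerivAt_pi.mpr (fun m => hder_yvar hp m)
  have hcomp := hφ.comp x hyv
  refine hcomp.congr_fderiv ?_; symm
  rw [lc_canon ((lc c).comp (ContinuousLinearMap.pi (fun m => lc (EE x m))))]
  apply lc_congr; intro k
  rw [vecE]
  rw [ContinuousLinearMap.comp_apply]
  have : (ContinuousLinearMap.pi (fun m => lc (EE x m))) (Pi.single k 1)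
      = fun m => EE x m k := by
    funext m; rw [ContinuousLinearMap.pi_apply, lc_single]
  rw [this, lc_apply]

/-- chain rule via `yv` for differentiable `φ` with unspecified derivative. -/
lemma hder_comp_y' {x : Fin n → ℝ} (hp : PosCtx x)
    {φ : (Fin ((n+1)/2) → ℝ) → ℝ}
    (hφ : DifferentiableAt ℝ φ (yv x)) :
    HasFDerivAt (fun z => φ (yv z)) (lc (vecE x (fun m => pdx φ (yv x) m))) x := by
  have h1 := hφ.hasFDerivAt
  have h2 := hasFDerivAt_lc h1
  exact hder_comp_y hp h2

lemma isOpen_Ann (a b : ℝ) : IsOpen (Ann n a b) := by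
  have henr : Continuous fun y : Fin ((n+1)/2) → ℝ => enr y := by
    apply Real.continuous_sqrt.comp
    unfold norm2
    exact continuous_finset_sum _ fun i _ => (continuous_apply i).pow 2
  have h1 : IsOpen {y : Fin ((n+1)/2) → ℝ | a < enr y} := isOpen_lt continuous_const henr
  have h2 : IsOpen {y : Fin ((n+1)/2) → ℝ | enr y < b} := isOpen_lt henr continuous_const
  have h3 : IsOpen {y : Fin ((n+1)/2) → ℝ | ∀ ℓ : Fin ((n+1)/2), 2*(ℓ:ℕ)+1 < n → 0 < y ℓ} := by
    have : {y : Fin ((n+1)/2) → ℝ | ∀ ℓ : Fin ((n+1)/2), 2*(ℓ:ℕ)+1 < n → 0 < y ℓ}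
        = ⋂ ℓ : Fin ((n+1)/2), {y | 2*(ℓ:ℕ)+1 < n → 0 < y ℓ} := by
      ext y; simp [Set.mem_iInter]
    rw [this]
    refine isOpen_iInter_of_finite fun ℓ => ?_
    by_cases hℓ : 2*(ℓ:ℕ)+1 < n
    · have : {y : Fin ((n+1)/2) → ℝ | 2*(ℓ:ℕ)+1 < n → 0 < y ℓ} = {y | 0 < y ℓ} := by
        ext y; simp [hℓ]
      rw [this]
      exact isOpen_lt continuous_const (continuous_apply ℓ)
    · have : {y : Fin ((n+1)/2) → ℝ | 2*(ℓ:ℕ)+1 < n → 0 < y ℓ} = Set.univ := by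
        ext y; simp [hℓ]
      rw [this]; exact isOpen_univ
  have hA : Ann n a b = {y : Fin ((n+1)/2) → ℝ | a < enr y} ∩ {y | enr y < b}
      ∩ {y | ∀ ℓ : Fin ((n+1)/2), 2*(ℓ:ℕ)+1 < n → 0 < y ℓ} := by
    ext y; simp [Ann, Set.mem_setOf_eq, Set.mem_inter_iff]; tauto
  rw [hA]
  exact (h1.inter h2).inter h3

lemma ann_contDiffAt {a b : ℝ} {f : (Fin ((n+1)/2) → ℝ) → Fin (n/2) → ℝ}
    (hf : ∀ i, ContDiffOn ℝ 2 (fun y => f y i) (closure (Ann n a b)))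
    {y : Fin ((n+1)/2) → ℝ} (hy : y ∈ Ann n a b) (i : Fin (n/2)) :
    ContDiffAt ℝ 2 (fun w => f w i) y :=
  (hf i).contDiffAt (mem_nhds_iff.mpr ⟨Ann n a b, subset_closure, isOpen_Ann a b, hy⟩)

/-- first derivatives of `f` (the coefficients `∂f_i/∂y_m`). -/
def Gf {n : ℕ} (f : (Fin ((n+1)/2) → ℝ) → Fin (n/2) → ℝ) (y : Fin ((n+1)/2) → ℝ)
    (i : Fin (n/2)) (m : Fin ((n+1)/2)) : ℝ := pdx (fun w => f w i) y m

/-- diagonal-relevant second derivatives of `f`. -/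
def Hf {n : ℕ} (f : (Fin ((n+1)/2) → ℝ) → Fin (n/2) → ℝ) (y : Fin ((n+1)/2) → ℝ)
    (i : Fin (n/2)) (m m' : Fin ((n+1)/2)) : ℝ :=
  pdx (fun w => pdx (fun w' => f w' i) w m) y m'

lemma hder_f {x : Fin n → ℝ} {a b : ℝ} {f : (Fin ((n+1)/2) → ℝ) → Fin (n/2) → ℝ}
    (hf : ∀ i, ContDiffOn ℝ 2 (fun y => f y i) (closure (Ann n a b)))
    (hx : yv x ∈ Ann n a b) (i : Fin (n/2)) :
    HasFDerivAt (fun z => f (yv z) i) (lc (vecE x (Gf f (yv x) i))) x := by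
  have hca := ann_contDiffAt hf hx i
  have hd : DifferentiableAt ℝ (fun w => f w i) (yv x) :=
    hca.differentiableAt (by norm_num)
  exact hder_comp_y' (posctx_of_ann hx) hd

lemma hder_pdf {x : Fin n → ℝ} {a b : ℝ} {f : (Fin ((n+1)/2) → ℝ) → Fin (n/2) → ℝ}
    (hf : ∀ i, ContDiffOn ℝ 2 (fun y => f y i) (closure (Ann n a b)))
    (hx : yv x ∈ Ann n a b) (i : Fin (n/2)) (m : Fin ((n+1)/2)) :
    HasFDerivAt (fun z => pdx (fun w => f w i) (yv z) m)
      (lc (vecE x (Hf f (yv x) i m))) x := by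
  have hca := ann_contDiffAt hf hx i
  have h1 : ContDiffAt ℝ 1 (fderiv ℝ (fun w => f w i)) (yv x) :=
    hca.fderiv_right (by norm_num)
  have h2 : DifferentiableAt ℝ (fderiv ℝ (fun w => f w i)) (yv x) :=
    h1.differentiableAt (by norm_num)
  have h3 : DifferentiableAt ℝ (fun w => fderiv ℝ (fun w' => f w' i) w (Pi.single m 1))
      (yv x) := h2.clm_apply (differentiableAt_const _)
  exact hder_comp_y' (posctx_of_ann hx) h3

lemma diffAt_pdf {a b : ℝ} {f : (Fin ((n+1)/2) → ℝ) → Fin (n/2) → ℝ}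
    (hf : ∀ i, ContDiffOn ℝ 2 (fun y => f y i) (closure (Ann n a b)))
    {y : Fin ((n+1)/2) → ℝ} (hy : y ∈ Ann n a b) (i : Fin (n/2)) (m : Fin ((n+1)/2)) :
    DifferentiableAt ℝ (fun w => pdx (fun w' => f w' i) w m) y := by
  have hca := ann_contDiffAt hf hy i
  have h2 : DifferentiableAt ℝ (fderiv ℝ (fun w => f w i)) y :=
    (hca.fderiv_right (m := 1) (by norm_num)).differentiableAt (by norm_num)
  exact h2.clm_apply (differentiableAt_const _)

end Calc1


noncomputable section Umap
variable {n : ℕ}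

lemma tI_val {n : ℕ} (ℓ : Fin (n/2)) : ((tI ℓ : Fin n) : ℕ) = 2*(ℓ:ℕ) := rfl
lemma tJ_val {n : ℕ} (ℓ : Fin (n/2)) : ((tJ ℓ : Fin n) : ℕ) = 2*(ℓ:ℕ)+1 := rfl
lemma tI_ne_tJ {n : ℕ} (ℓ : Fin (n/2)) : (tI ℓ : Fin n) ≠ tJ ℓ := by
  rw [Ne, Fin.ext_iff, tI_val, tJ_val]; omega

/-- Kronecker delta as a real. -/
def ind {n : ℕ} (j k : Fin n) : ℝ := if k = j then 1 else 0

def cosf (f : (Fin ((n+1)/2) → ℝ) → Fin (n/2) → ℝ) (x : Fin n → ℝ) (ℓ : Fin (n/2)) : ℝ :=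
  Real.cos (f (yv x) ℓ)
def sinf (f : (Fin ((n+1)/2) → ℝ) → Fin (n/2) → ℝ) (x : Fin n → ℝ) (ℓ : Fin (n/2)) : ℝ :=
  Real.sin (f (yv x) ℓ)
/-- the gradient (in `x`) of `f_ℓ ∘ yv`. -/
def Vv (f : (Fin ((n+1)/2) → ℝ) → Fin (n/2) → ℝ) (x : Fin n → ℝ) (ℓ : Fin (n/2)) :
    Fin n → ℝ := vecE x (Gf f (yv x) ℓ)
def qa (f : (Fin ((n+1)/2) → ℝ) → Fin (n/2) → ℝ) (x : Fin n → ℝ) (ℓ : Fin (n/2)) : ℝ :=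
  -(sinf f x ℓ * x (tI ℓ)) - cosf f x ℓ * x (tJ ℓ)
def qb (f : (Fin ((n+1)/2) → ℝ) → Fin (n/2) → ℝ) (x : Fin n → ℝ) (ℓ : Fin (n/2)) : ℝ :=
  cosf f x ℓ * x (tI ℓ) - sinf f x ℓ * x (tJ ℓ)

variable {f : (Fin ((n+1)/2) → ℝ) → Fin (n/2) → ℝ} {u : (Fin n → ℝ) → Fin n → ℝ}

lemma u_apply (hu : ∀ z, u z = Qf f (yv z) *ᵥ z) (z : Fin n → ℝ) (i : Fin n) :
    u z i = ∑ j, Qf f (yv z) i j * z j := by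
  rw [hu]; rfl

lemma Qf_zero (y : Fin ((n+1)/2) → ℝ) {i j : Fin n}
    (h1 : ¬((i:ℕ)/2 = (j:ℕ)/2 ∧ (i:ℕ)/2 < n/2)) (h2 : i ≠ j) :
    Qf f y i j = 0 := by
  unfold Qf
  rw [Matrix.of_apply, dif_neg h1, if_neg h2]

lemma Qf_cos (y : Fin ((n+1)/2) → ℝ) {i j : Fin n} {ℓ : Fin (n/2)}
    (hi : (i:ℕ) = 2*(ℓ:ℕ)) (hj : (j:ℕ) = 2*(ℓ:ℕ)) :
    Qf f y i j = Real.cos (f y ℓ) := by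
  have hl := ℓ.isLt
  have h1 : (i:ℕ)/2 = (j:ℕ)/2 ∧ (i:ℕ)/2 < n/2 := by omega
  unfold Qf
  rw [Matrix.of_apply, dif_pos h1, if_pos (by omega), if_pos (by omega)]
  have harg : (⟨(i:ℕ)/2, h1.2⟩ : Fin (n/2)) = ℓ := by
    apply Fin.ext
    show (i:ℕ)/2 = (ℓ:ℕ)
    omega
  exact congrArg (fun t => Real.cos (f y t)) harg

lemma Qf_msin (y : Fin ((n+1)/2) → ℝ) {i j : Fin n} {ℓ : Fin (n/2)}
    (hi : (i:ℕ) = 2*(ℓ:ℕ)) (hj : (j:ℕ) = 2*(ℓ:ℕ)+1) :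
    Qf f y i j = -Real.sin (f y ℓ) := by
  have hl := ℓ.isLt
  have h1 : (i:ℕ)/2 = (j:ℕ)/2 ∧ (i:ℕ)/2 < n/2 := by omega
  unfold Qf
  rw [Matrix.of_apply, dif_pos h1, if_pos (by omega), if_neg (by omega)]
  have harg : (⟨(i:ℕ)/2, h1.2⟩ : Fin (n/2)) = ℓ := by
    apply Fin.ext
    show (i:ℕ)/2 = (ℓ:ℕ)
    omega
  exact congrArg (fun t => -Real.sin (f y t)) harg

lemma Qf_sin (y : Fin ((n+1)/2) → ℝ) {i j : Fin n} {ℓ : Fin (n/2)}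
    (hi : (i:ℕ) = 2*(ℓ:ℕ)+1) (hj : (j:ℕ) = 2*(ℓ:ℕ)) :
    Qf f y i j = Real.sin (f y ℓ) := by
  have hl := ℓ.isLt
  have h1 : (i:ℕ)/2 = (j:ℕ)/2 ∧ (i:ℕ)/2 < n/2 := by omega
  unfold Qf
  rw [Matrix.of_apply, dif_pos h1, if_neg (by omega), if_pos (by omega)]
  have harg : (⟨(i:ℕ)/2, h1.2⟩ : Fin (n/2)) = ℓ := by
    apply Fin.ext
    show (i:ℕ)/2 = (ℓ:ℕ)
    omega
  exact congrArg (fun t => Real.sin (f y t)) harg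

lemma Qf_cos' (y : Fin ((n+1)/2) → ℝ) {i j : Fin n} {ℓ : Fin (n/2)}
    (hi : (i:ℕ) = 2*(ℓ:ℕ)+1) (hj : (j:ℕ) = 2*(ℓ:ℕ)+1) :
    Qf f y i j = Real.cos (f y ℓ) := by
  have hl := ℓ.isLt
  have h1 : (i:ℕ)/2 = (j:ℕ)/2 ∧ (i:ℕ)/2 < n/2 := by omega
  unfold Qf
  rw [Matrix.of_apply, dif_pos h1, if_neg (by omega), if_neg (by omega)]
  have harg : (⟨(i:ℕ)/2, h1.2⟩ : Fin (n/2)) = ℓ := by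
    apply Fin.ext
    show (i:ℕ)/2 = (ℓ:ℕ)
    omega
  exact congrArg (fun t => Real.cos (f y t)) harg

lemma Qf_one (y : Fin ((n+1)/2) → ℝ) {i : Fin n} (h : ¬((i:ℕ)/2 < n/2)) :
    Qf f y i i = 1 := by
  unfold Qf
  rw [Matrix.of_apply, dif_neg (by tauto), if_pos rfl]

lemma u_tI (hu : ∀ z, u z = Qf f (yv z) *ᵥ z) (z : Fin n → ℝ) (ℓ : Fin (n/2)) :
    u z (tI ℓ) = cosf f z ℓ * z (tI ℓ) - sinf f z ℓ * z (tJ ℓ) := by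
  rw [u_apply hu]
  rw [Finset.sum_eq_add_of_mem (tI ℓ) (tJ ℓ) (Finset.mem_univ _) (Finset.mem_univ _)
    (tI_ne_tJ ℓ)]
  · rw [Qf_cos (yv z) (tI_val ℓ) (tI_val ℓ), Qf_msin (yv z) (tI_val ℓ) (tJ_val ℓ)]
    rw [cosf, sinf]
    ring
  · intro j _ hj
    have hv1 : (j:ℕ) ≠ 2*(ℓ:ℕ) := fun hc => hj.1 (Fin.ext (by rw [tI_val]; omega))
    have hv2 : (j:ℕ) ≠ 2*(ℓ:ℕ)+1 := fun hc => hj.2 (Fin.ext (by rw [tJ_val]; omega))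
    have hiv := tI_val ℓ
    rw [Qf_zero (yv z) (by omega) (fun hc2 => hj.1 hc2.symm), zero_mul]

lemma u_tJ (hu : ∀ z, u z = Qf f (yv z) *ᵥ z) (z : Fin n → ℝ) (ℓ : Fin (n/2)) :
    u z (tJ ℓ) = sinf f z ℓ * z (tI ℓ) + cosf f z ℓ * z (tJ ℓ) := by
  rw [u_apply hu]
  rw [Finset.sum_eq_add_of_mem (tI ℓ) (tJ ℓ) (Finset.mem_univ _) (Finset.mem_univ _)
    (tI_ne_tJ ℓ)]
  · rw [Qf_sin (yv z) (tJ_val ℓ) (tI_val ℓ), Qf_cos' (yv z) (tJ_val ℓ) (tJ_val ℓ)]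
    rw [cosf, sinf]
  · intro j _ hj
    have hv1 : (j:ℕ) ≠ 2*(ℓ:ℕ) := fun hc => hj.1 (Fin.ext (by rw [tI_val]; omega))
    have hv2 : (j:ℕ) ≠ 2*(ℓ:ℕ)+1 := fun hc => hj.2 (Fin.ext (by rw [tJ_val]; omega))
    have hiv := tJ_val ℓ
    rw [Qf_zero (yv z) (by omega) (fun hc2 => hj.2 hc2.symm), zero_mul]

lemma u_odd (hu : ∀ z, u z = Qf f (yv z) *ᵥ z) (z : Fin n → ℝ) {i : Fin n}
    (hi : ¬((i:ℕ) < 2*(n/2))) : u z i = z i := by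
  rw [u_apply hu]
  rw [Finset.sum_eq_single i]
  · rw [Qf_one (yv z) (by omega), one_mul]
  · intro j _ hj
    rw [Qf_zero (yv z) (by intro hc; omega) (Ne.symm hj), zero_mul]
  · simp

lemma u_x_tI (hu : ∀ z, u z = Qf f (yv z) *ᵥ z) (x : Fin n → ℝ) (ℓ : Fin (n/2)) :
    u x (tI ℓ) = qb f x ℓ := by rw [u_tI hu, qb]
lemma u_x_tJ (hu : ∀ z, u z = Qf f (yv z) *ᵥ z) (x : Fin n → ℝ) (ℓ : Fin (n/2)) :
    u x (tJ ℓ) = -(qa f x ℓ) := by rw [u_tJ hu, qa]; ring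

variable {a b : ℝ}

lemma hder_u_tI (hu : ∀ z, u z = Qf f (yv z) *ᵥ z)
    (hf : ∀ i, ContDiffOn ℝ 2 (fun y => f y i) (closure (Ann n a b)))
    {x : Fin n → ℝ} (hx : yv x ∈ Ann n a b) (ℓ : Fin (n/2)) :
    HasFDerivAt (fun z => u z (tI ℓ))
      (lc (fun k => cosf f x ℓ * ind (tI ℓ) k - sinf f x ℓ * ind (tJ ℓ) k
        + qa f x ℓ * Vv f x ℓ k)) x := by
  have hEq : (fun z => u z (tI ℓ))
      = fun z => Real.cos (f (yv z) ℓ) * z (tI ℓ) - Real.sin (f (yv z) ℓ) * z (tJ ℓ) := by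
    funext z; rw [u_tI hu]; rfl
  rw [hEq]
  have hF := hder_f hf hx ℓ
  have hcos := hder_comp1 (Real.hasDerivAt_cos (f (yv x) ℓ)) hF
  have hsin := hder_comp1 (Real.hasDerivAt_sin (f (yv x) ℓ)) hF
  have h3 := hder_sub (hder_mul hcos (hder_proj (tI ℓ) x)) (hder_mul hsin (hder_proj (tJ ℓ) x))
  convert h3 using 1
  apply lc_congr; intro k
  simp only [cosf, sinf, qa, Vv, ind]
  ring

lemma hder_u_tJ (hu : ∀ z, u z = Qf f (yv z) *ᵥ z)
    (hf : ∀ i, ContDiffOn ℝ 2 (fun y => f y i) (closure (Ann n a b)))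
    {x : Fin n → ℝ} (hx : yv x ∈ Ann n a b) (ℓ : Fin (n/2)) :
    HasFDerivAt (fun z => u z (tJ ℓ))
      (lc (fun k => sinf f x ℓ * ind (tI ℓ) k + cosf f x ℓ * ind (tJ ℓ) k
        + qb f x ℓ * Vv f x ℓ k)) x := by
  have hEq : (fun z => u z (tJ ℓ))
      = fun z => Real.sin (f (yv z) ℓ) * z (tI ℓ) + Real.cos (f (yv z) ℓ) * z (tJ ℓ) := by
    funext z; rw [u_tJ hu]; rfl
  rw [hEq]
  have hF := hder_f hf hx ℓ
  have hcos := hder_comp1 (Real.hasDerivAt_cos (f (yv x) ℓ)) hF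
  have hsin := hder_comp1 (Real.hasDerivAt_sin (f (yv x) ℓ)) hF
  have h3 := hder_add (hder_mul hsin (hder_proj (tI ℓ) x)) (hder_mul hcos (hder_proj (tJ ℓ) x))
  convert h3 using 1
  apply lc_congr; intro k
  simp only [cosf, sinf, qb, Vv, ind]
  ring

lemma hder_u_odd (hu : ∀ z, u z = Qf f (yv z) *ᵥ z)
    {x : Fin n → ℝ} {i : Fin n} (hi : ¬((i:ℕ) < 2*(n/2))) :
    HasFDerivAt (fun z => u z i) (lc (ind i)) x := by
  have hEq : (fun z => u z i) = fun z => z i := by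
    funext z; exact u_odd hu z hi
  rw [hEq]
  exact hder_proj i x

end Umap


noncomputable section Pcalc
variable {n : ℕ}

lemma gradm_apply (u : (Fin n → ℝ) → Fin n → ℝ) (x : Fin n → ℝ) (i j : Fin n) :
    gradm u x i j = pdx (fun z => u z i) x j := rfl

lemma sum_ind_mul (j : Fin n) (v : Fin n → ℝ) : ∑ k, ind j k * v k = v j := by
  rw [Finset.sum_eq_single j]
  · simp [ind]
  · intro k _ hk; simp [ind, hk]
  · simp

/-- generic row shape `c δ_{j1} + d δ_{j2} + e V`. -/
def rowc (c d e : ℝ) (j1 j2 : Fin n) (V : Fin n → ℝ) : Fin n → ℝ :=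
  fun k => c * ind j1 k + d * ind j2 k + e * V k

lemma sum_rowc_mul (c d e : ℝ) (j1 j2 : Fin n) (V v : Fin n → ℝ) :
    ∑ k, rowc c d e j1 j2 V k * v k
      = c * v j1 + d * v j2 + e * ∑ k, V k * v k := by
  have h : ∀ k, rowc c d e j1 j2 V k * v k
      = c * (ind j1 k * v k) + d * (ind j2 k * v k) + e * (V k * v k) := fun k => by
    rw [rowc]; ring
  rw [Finset.sum_congr rfl (fun k _ => h k), Finset.sum_add_distrib, Finset.sum_add_distrib,
    ← Finset.mul_sum, ← Finset.mul_sum, ← Finset.mul_sum, sum_ind_mul, sum_ind_mul]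

lemma rowc_eval1 {j1 j2 : Fin n} (h12 : j1 ≠ j2) (c d e : ℝ) (V : Fin n → ℝ) :
    rowc c d e j1 j2 V j1 = c + e * V j1 := by
  rw [rowc, ind, ind, if_pos rfl, if_neg h12]; ring

lemma rowc_eval2 {j1 j2 : Fin n} (h12 : j1 ≠ j2) (c d e : ℝ) (V : Fin n → ℝ) :
    rowc c d e j1 j2 V j2 = d + e * V j2 := by
  rw [rowc, ind, ind, if_pos rfl, if_neg (Ne.symm h12)]; ring

lemma sum_rowc_sq {j1 j2 : Fin n} (h12 : j1 ≠ j2) (c d e : ℝ) (V : Fin n → ℝ) :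
    ∑ k, rowc c d e j1 j2 V k * rowc c d e j1 j2 V k
      = c^2 + d^2 + e^2 * (∑ k, V k * V k) + 2*c*e*(V j1) + 2*d*e*(V j2) := by
  rw [sum_rowc_mul, rowc_eval1 h12, rowc_eval2 h12]
  have h2 : ∑ k, V k * rowc c d e j1 j2 V k = ∑ k, rowc c d e j1 j2 V k * V k := by
    exact Finset.sum_congr rfl fun k _ => mul_comm _ _
  rw [h2, sum_rowc_mul]
  ring

variable {f : (Fin ((n+1)/2) → ℝ) → Fin (n/2) → ℝ} {u : (Fin n → ℝ) → Fin n → ℝ} {a b : ℝ}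

lemma dIdx_true (ℓ : Fin (n/2)) : 2*((dIdx ℓ : Fin ((n+1)/2)):ℕ)+1 < n := tI_lt ℓ

lemma yvar_sq_tI (x : Fin n → ℝ) (ℓ : Fin (n/2)) :
    yvar x (dIdx ℓ)^2 = x (tI ℓ)^2 + x (tJ ℓ)^2 := by
  rw [yvar_sq (dIdx_true ℓ)]
  rfl

lemma qab_sq (x : Fin n → ℝ) (ℓ : Fin (n/2)) :
    qa f x ℓ^2 + qb f x ℓ^2 = yvar x (dIdx ℓ)^2 := by
  rw [yvar_sq_tI, qa, qb]
  have hsc := Real.sin_sq_add_cos_sq (f (yv x) ℓ)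
  rw [sinf, cosf]
  linear_combination (x (tI ℓ)^2 + x (tJ ℓ)^2) * hsc

/-- the three row identities for `∇u`. -/
lemma gradm_row_tI (hu : ∀ z, u z = Qf f (yv z) *ᵥ z)
    (hf : ∀ i, ContDiffOn ℝ 2 (fun y => f y i) (closure (Ann n a b)))
    {x : Fin n → ℝ} (hx : yv x ∈ Ann n a b) (ℓ : Fin (n/2)) (k : Fin n) :
    gradm u x (tI ℓ) k
      = rowc (cosf f x ℓ) (-sinf f x ℓ) (qa f x ℓ) (tI ℓ) (tJ ℓ) (Vv f x ℓ) k := by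
  rw [gradm_apply, pdx_of_hasFDerivAt (hder_u_tI hu hf hx ℓ) k, rowc]
  ring

lemma gradm_row_tJ (hu : ∀ z, u z = Qf f (yv z) *ᵥ z)
    (hf : ∀ i, ContDiffOn ℝ 2 (fun y => f y i) (closure (Ann n a b)))
    {x : Fin n → ℝ} (hx : yv x ∈ Ann n a b) (ℓ : Fin (n/2)) (k : Fin n) :
    gradm u x (tJ ℓ) k
      = rowc (sinf f x ℓ) (cosf f x ℓ) (qb f x ℓ) (tI ℓ) (tJ ℓ) (Vv f x ℓ) k := by
  rw [gradm_apply, pdx_of_hasFDerivAt (hder_u_tJ hu hf hx ℓ) k, rowc]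

lemma gradm_row_odd (hu : ∀ z, u z = Qf f (yv z) *ᵥ z)
    {x : Fin n → ℝ} {i : Fin n} (hi : ¬((i:ℕ) < 2*(n/2))) (k : Fin n) :
    gradm u x i k = ind i k := by
  rw [gradm_apply, pdx_of_hasFDerivAt (hder_u_odd hu hi) k]

lemma sum_Vv_mul_Vv {x : Fin n → ℝ} (hp : PosCtx x) (ℓ ℓ' : Fin (n/2)) :
    ∑ k, Vv f x ℓ k * Vv f x ℓ' k = ∑ m, Gf f (yv x) ℓ m * Gf f (yv x) ℓ' m := by
  rw [Vv, Vv, sum_vecE_mul_vecE hp]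

lemma norm2_gradx_eq (y : Fin ((n+1)/2) → ℝ) (ℓ : Fin (n/2)) :
    norm2 (gradx (fun w => f w ℓ) y) = ∑ m, Gf f y ℓ m * Gf f y ℓ m := by
  rw [norm2]
  exact Finset.sum_congr rfl fun m _ => by rw [pow_two]; rfl

lemma frob2_gradm (hu : ∀ z, u z = Qf f (yv z) *ᵥ z)
    (hf : ∀ i, ContDiffOn ℝ 2 (fun y => f y i) (closure (Ann n a b)))
    {x : Fin n → ℝ} (hx : yv x ∈ Ann n a b) :
    frob2 (gradm u x) = xiArg n f (yv x) := by
  have hp := posctx_of_ann hx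
  rw [frob2, fin_sum_split (fun i => ∑ j, gradm u x i j ^2)]
  have hblock : ∀ ℓ : Fin (n/2),
      (∑ j, gradm u x (tI ℓ) j ^2) + (∑ j, gradm u x (tJ ℓ) j ^2)
        = 2 + yvar x (dIdx ℓ)^2 * norm2 (gradx (fun w => f w ℓ) (yv x)) := by
    intro ℓ
    have e1 : ∑ j, gradm u x (tI ℓ) j ^2
        = ∑ k, rowc (cosf f x ℓ) (-sinf f x ℓ) (qa f x ℓ) (tI ℓ) (tJ ℓ) (Vv f x ℓ) k
            * rowc (cosf f x ℓ) (-sinf f x ℓ) (qa f x ℓ) (tI ℓ) (tJ ℓ) (Vv f x ℓ) k := by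
      refine Finset.sum_congr rfl fun k _ => ?_
      rw [gradm_row_tI hu hf hx ℓ k, pow_two]
    have e2 : ∑ j, gradm u x (tJ ℓ) j ^2
        = ∑ k, rowc (sinf f x ℓ) (cosf f x ℓ) (qb f x ℓ) (tI ℓ) (tJ ℓ) (Vv f x ℓ) k
            * rowc (sinf f x ℓ) (cosf f x ℓ) (qb f x ℓ) (tI ℓ) (tJ ℓ) (Vv f x ℓ) k := by
      refine Finset.sum_congr rfl fun k _ => ?_
      rw [gradm_row_tJ hu hf hx ℓ k, pow_two]
    rw [e1, e2, sum_rowc_sq (tI_ne_tJ ℓ), sum_rowc_sq (tI_ne_tJ ℓ)]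
    have hy := hp (dIdx ℓ) (dIdx_true ℓ)
    have hVI : Vv f x ℓ (tI ℓ) = Gf f (yv x) ℓ (dIdx ℓ) * (x (tI ℓ) / yvar x (dIdx ℓ)) :=
      vecE_tI x _ ℓ
    have hVJ : Vv f x ℓ (tJ ℓ) = Gf f (yv x) ℓ (dIdx ℓ) * (x (tJ ℓ) / yvar x (dIdx ℓ)) :=
      vecE_tJ x _ ℓ
    have hsc := Real.sin_sq_add_cos_sq (f (yv x) ℓ)
    have hq2 := qab_sq (f := f) x ℓ
    have hca : cosf f x ℓ * qa f x ℓ + sinf f x ℓ * qb f x ℓ = -x (tJ ℓ) := by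
      rw [qa, qb, sinf, cosf]
      linear_combination (-(x (tJ ℓ)))*hsc
    have hcb : cosf f x ℓ * qb f x ℓ - sinf f x ℓ * qa f x ℓ = x (tI ℓ) := by
      rw [qa, qb, sinf, cosf]
      linear_combination (x (tI ℓ))*hsc
    have hcross : (-(x (tJ ℓ))) * Vv f x ℓ (tI ℓ) + x (tI ℓ) * Vv f x ℓ (tJ ℓ) = 0 := by
      rw [hVI, hVJ]
      field_simp
      ring
    rw [norm2_gradx_eq, ← sum_Vv_mul_Vv hp ℓ ℓ]
    have hsc' : sinf f x ℓ^2 + cosf f x ℓ^2 = 1 := hsc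
    linear_combination 2*hsc' + (∑ k, Vv f x ℓ k * Vv f x ℓ k)*hq2
      + 2*(Vv f x ℓ (tI ℓ))*hca + 2*(Vv f x ℓ (tJ ℓ))*hcb + 2*hcross
  have hcardn : ∑ _ℓ : Fin (n/2), (2:ℝ) = 2*((n/2 : ℕ):ℝ) := by
    rw [Finset.sum_const]
    simp [mul_comm]
  rw [Finset.sum_congr rfl (fun ℓ _ => hblock ℓ), Finset.sum_add_distrib, hcardn, xiArg]
  have hsame : (∑ ℓ : Fin (n/2), yvar x (dIdx ℓ)^2 * norm2 (gradx (fun w => f w ℓ) (yv x)))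
      = ∑ j : Fin (n/2), (yv x (dIdx j))^2 * norm2 (gradx (fun z => f z j) (yv x)) := rfl
  rw [hsame]
  by_cases hodd : n % 2 = 1
  · rw [dif_pos hodd]
    have hone : (∑ j, gradm u x ⟨n-1, by omega⟩ j ^2) = 1 := by
      have hrow : ∀ j, gradm u x ⟨n-1, by omega⟩ j ^2 = ind (⟨n-1, by omega⟩ : Fin n) j ^2 :=
        fun j => by rw [gradm_row_odd hu (by show ¬(n-1 < 2*(n/2)); omega) j]
      rw [Finset.sum_congr rfl fun j _ => hrow j, Finset.sum_eq_single (⟨n-1, by omega⟩ : Fin n)]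
      · simp [ind]
      · intro k _ hk; simp [ind, hk]
      · simp
    rw [hone]
    have hn2 : 2*(n/2) + 1 = n := by omega
    have hcast : (n:ℝ) = 2*((n/2:ℕ):ℝ) + 1 := by exact_mod_cast hn2.symm
    linarith [hcast]
  · rw [dif_neg hodd, add_zero]
    have hn2 : 2*(n/2) = n := by omega
    have hcast : (n:ℝ) = 2*((n/2:ℕ):ℝ) := by exact_mod_cast hn2.symm
    linarith [hcast]

lemma norm2_yv (x : Fin n → ℝ) : norm2 (yv x) = norm2 x := by
  rw [norm2, norm2, finN_sum_split (fun m => yv x m ^2), fin_sum_split (fun k => x k ^2)]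
  congr 1
  · refine Finset.sum_congr rfl fun ℓ _ => ?_
    have : yv x (dIdx ℓ) ^2 = yvar x (dIdx ℓ) ^2 := rfl
    rw [this, yvar_sq_tI]
  · by_cases hodd : n % 2 = 1
    · rw [dif_pos hodd, dif_pos hodd]
      have : yv x ⟨n/2, by omega⟩ = x ⟨n-1, by omega⟩ := by
        show yvar x _ = _
        rw [yvar_odd (by show ¬(2*(n/2)+1 < n); omega)]
      rw [this]
    · rw [dif_neg hodd, dif_neg hodd]

lemma enr_yv (x : Fin n → ℝ) : enr (yv x) = enr x := by
  rw [enr, enr, norm2_yv]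

lemma norm2_u_eq (hu : ∀ z, u z = Qf f (yv z) *ᵥ z) (x : Fin n → ℝ) :
    norm2 (u x) = norm2 x := by
  rw [norm2, norm2, fin_sum_split (fun i => u x i ^2), fin_sum_split (fun k => x k ^2)]
  congr 1
  · refine Finset.sum_congr rfl fun ℓ _ => ?_
    rw [u_tI hu, u_tJ hu]
    have hsc := Real.sin_sq_add_cos_sq (f (yv x) ℓ)
    rw [sinf, cosf]
    linear_combination (x (tI ℓ)^2 + x (tJ ℓ)^2) * hsc
  · by_cases hodd : n % 2 = 1
    · rw [dif_pos hodd, dif_pos hodd, u_odd hu x (by show ¬(n-1 < 2*(n/2)); omega)]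
    · rw [dif_neg hodd, dif_neg hodd]

lemma norm2_eq_enr_sq (v : Fin n → ℝ) : norm2 v = enr v ^ 2 := by
  rw [enr, Real.sq_sqrt]
  rw [norm2]
  positivity

end Pcalc


noncomputable section Acal
variable {n : ℕ}

/-- the composed coefficient `a(y) = A(‖y‖,‖y‖²,ξ(y))`. -/
def Acomp (n : ℕ) (A : ℝ → ℝ → ℝ → ℝ) (f : (Fin ((n+1)/2) → ℝ) → Fin (n/2) → ℝ)
    (w : Fin ((n+1)/2) → ℝ) : ℝ := A (enr w) ((enr w)^2) (xiArg n f w)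

variable {f : (Fin ((n+1)/2) → ℝ) → Fin (n/2) → ℝ} {u : (Fin n → ℝ) → Fin n → ℝ}
variable {a b : ℝ} {A B : ℝ → ℝ → ℝ → ℝ}

lemma norm2_nonneg {m : ℕ} (v : Fin m → ℝ) : 0 ≤ norm2 v := by
  rw [norm2]; positivity

lemma xiArg_pos (hn : 2 ≤ n) (f : (Fin ((n+1)/2) → ℝ) → Fin (n/2) → ℝ)
    (y : Fin ((n+1)/2) → ℝ) : 0 < xiArg n f y := by
  rw [xiArg]
  have h1 : (0:ℝ) ≤ ∑ j : Fin (n/2), (y (dIdx j))^2 * norm2 (gradx (fun z => f z j) y) :=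
    Finset.sum_nonneg fun j _ => mul_nonneg (sq_nonneg _) (norm2_nonneg _)
  have h2 : (2:ℝ) ≤ (n:ℝ) := by exact_mod_cast hn
  linarith

lemma enr_pos_of_ann {y : Fin ((n+1)/2) → ℝ} (ha : 0 < a) (hy : y ∈ Ann n a b) :
    0 < enr y := lt_trans ha hy.1

lemma diffAt_enr {m : ℕ} {w : Fin m → ℝ} (hw : 0 < enr w) :
    DifferentiableAt ℝ (fun v : Fin m → ℝ => enr v) w := by
  have hn2 : DifferentiableAt ℝ (fun v : Fin m → ℝ => norm2 v) w := by
    have : (fun v : Fin m → ℝ => norm2 v) = fun v => ∑ i, v i ^2 := rfl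
    rw [this]
    exact DifferentiableAt.fun_sum fun i _ =>
      (((ContinuousLinearMap.proj i : (Fin m → ℝ) →L[ℝ] ℝ).differentiableAt)).pow 2
  have hne : norm2 w ≠ 0 := by
    rw [norm2_eq_enr_sq]; positivity
  exact DifferentiableAt.sqrt hn2 hne

lemma diffAt_xiArg {y : Fin ((n+1)/2) → ℝ}
    (hf : ∀ i, ContDiffOn ℝ 2 (fun y => f y i) (closure (Ann n a b)))
    (hy : y ∈ Ann n a b) :
    DifferentiableAt ℝ (fun w => xiArg n f w) y := by
  have : (fun w => xiArg n f w)
      = fun w => (n:ℝ) + ∑ j : Fin (n/2), (w (dIdx j))^2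
          * ∑ m, (pdx (fun z => f z j) w m)^2 := rfl
  rw [this]
  refine (differentiableAt_const _).add (DifferentiableAt.fun_sum fun j _ => ?_)
  refine DifferentiableAt.mul ?_ ?_
  · exact ((ContinuousLinearMap.proj (dIdx j) :
      (Fin ((n+1)/2) → ℝ) →L[ℝ] ℝ).differentiableAt).pow 2
  · exact DifferentiableAt.fun_sum fun m _ => (diffAt_pdf hf hy j m).pow 2

lemma diffAt_A3 (hn : 2 ≤ n) (ha : 0 < a) (hab : a < b)
    (hA : ContDiffOn ℝ 1 (fun p : ℝ × ℝ × ℝ => A p.1 p.2.1 p.2.2)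
        (Set.Icc a b ×ˢ Set.Ioi 0 ×ˢ Set.Ioi 0))
    (f : (Fin ((n+1)/2) → ℝ) → Fin (n/2) → ℝ)
    {y : Fin ((n+1)/2) → ℝ} (hy : y ∈ Ann n a b) :
    DifferentiableAt ℝ (fun p : ℝ × ℝ × ℝ => A p.1 p.2.1 p.2.2)
      (enr y, (enr y)^2, xiArg n f y) := by
  have hmem : (Set.Icc a b ×ˢ Set.Ioi 0 ×ˢ Set.Ioi 0) ∈
      nhds ((enr y, (enr y)^2, xiArg n f y) : ℝ × ℝ × ℝ) := by
    rw [mem_nhds_iff]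
    refine ⟨Set.Ioo a b ×ˢ Set.Ioi 0 ×ˢ Set.Ioi 0, ?_, ?_, ?_⟩
    · refine Set.prod_mono Set.Ioo_subset_Icc_self (Set.prod_mono ?_ ?_) <;> exact le_refl _
    · exact (isOpen_Ioo).prod ((isOpen_Ioi).prod (isOpen_Ioi))
    · refine ⟨⟨hy.1, hy.2.1⟩, ?_, ?_⟩
      · have := enr_pos_of_ann ha hy
        simp only [Set.mem_Ioi]
        positivity
      · exact xiArg_pos hn f y
  exact (hA.contDiffAt hmem).differentiableAt one_ne_zero

lemma diffAt_Acomp (hn : 2 ≤ n) (ha : 0 < a) (hab : a < b)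
    (hA : ContDiffOn ℝ 1 (fun p : ℝ × ℝ × ℝ => A p.1 p.2.1 p.2.2)
        (Set.Icc a b ×ˢ Set.Ioi 0 ×ˢ Set.Ioi 0))
    (hf : ∀ i, ContDiffOn ℝ 2 (fun y => f y i) (closure (Ann n a b)))
    {y : Fin ((n+1)/2) → ℝ} (hy : y ∈ Ann n a b) :
    DifferentiableAt ℝ (Acomp n A f) y := by
  have henr := diffAt_enr (enr_pos_of_ann ha hy)
  have hargs : DifferentiableAt ℝ
      (fun w => ((enr w, (enr w)^2, xiArg n f w) : ℝ × ℝ × ℝ)) y :=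
    henr.prodMk ((henr.pow 2).prodMk (diffAt_xiArg hf hy))
  exact (diffAt_A3 hn ha hab hA f hy).comp y hargs

lemma cont_yv : Continuous (fun z : Fin n → ℝ => yv z) := by
  apply continuous_pi
  intro m
  by_cases h : 2*(m:ℕ)+1 < n
  · have : (fun z : Fin n → ℝ => yv z m)
        = fun z => Real.sqrt (z ⟨2*(m:ℕ), by omega⟩^2 + z ⟨2*(m:ℕ)+1, h⟩^2) := by
      funext z; exact yvar_true h
    rw [this]
    exact Real.continuous_sqrt.comp (((continuous_apply _).pow 2).add
      ((continuous_apply _).pow 2))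
  · have : (fun z : Fin n → ℝ => yv z m)
        = fun z => z ⟨n-1, by have := m.isLt; omega⟩ := by
      funext z; exact yvar_odd h
    rw [this]
    exact continuous_apply _

lemma uset_mem_nhds {x : Fin n → ℝ} (hx : yv x ∈ Ann n a b) :
    {z : Fin n → ℝ | yv z ∈ Ann n a b} ∈ nhds x :=
  ((isOpen_Ann a b).preimage cont_yv).mem_nhds hx

lemma hder_gA (hn : 2 ≤ n) (ha : 0 < a) (hab : a < b)
    (hA : ContDiffOn ℝ 1 (fun p : ℝ × ℝ × ℝ => A p.1 p.2.1 p.2.2)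
        (Set.Icc a b ×ˢ Set.Ioi 0 ×ˢ Set.Ioi 0))
    (hf : ∀ i, ContDiffOn ℝ 2 (fun y => f y i) (closure (Ann n a b)))
    (hu : ∀ z, u z = Qf f (yv z) *ᵥ z)
    {x : Fin n → ℝ} (hx : yv x ∈ Ann n a b) (k : Fin n) :
    gradx (fun z => A (enr z) (norm2 (u z)) (frob2 (gradm u z))) x k
      = vecE x (fun m => pdx (Acomp n A f) (yv x) m) k := by
  have heq : ∀ z ∈ {z : Fin n → ℝ | yv z ∈ Ann n a b},
      A (enr z) (norm2 (u z)) (frob2 (gradm u z)) = Acomp n A f (yv z) := by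
    intro z hz
    rw [Acomp, enr_yv, norm2_u_eq hu, norm2_eq_enr_sq, frob2_gradm hu hf hz]
  have hev : (fun z => A (enr z) (norm2 (u z)) (frob2 (gradm u z)))
      =ᶠ[nhds x] (fun z => Acomp n A f (yv z)) :=
    Filter.eventuallyEq_of_mem (uset_mem_nhds hx) heq
  have hder := hder_comp_y' (posctx_of_ann hx)
    (diffAt_Acomp hn ha hab hA hf hx)
  rw [gradx, pdx, hev.fderiv_eq, ← pdx]
  exact pdx_of_hasFDerivAt hder k

end Acal


noncomputable section Pde
variable {n : ℕ}
variable {f : (Fin ((n+1)/2) → ℝ) → Fin (n/2) → ℝ} {a b : ℝ} {A : ℝ → ℝ → ℝ → ℝ}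

/-- gradient coefficients of `Acomp`. -/
def amv (n : ℕ) (A : ℝ → ℝ → ℝ → ℝ) (f : (Fin ((n+1)/2) → ℝ) → Fin (n/2) → ℝ)
    (y : Fin ((n+1)/2) → ℝ) : Fin ((n+1)/2) → ℝ := fun m => pdx (Acomp n A f) y m

def kap (n : ℕ) (A : ℝ → ℝ → ℝ → ℝ) (f : (Fin ((n+1)/2) → ℝ) → Fin (n/2) → ℝ)
    (y : Fin ((n+1)/2) → ℝ) (i : Fin (n/2)) : ℝ :=
  ∑ m, amv n A f y m * Gf f y i m

def muv (n : ℕ) (f : (Fin ((n+1)/2) → ℝ) → Fin (n/2) → ℝ)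
    (y : Fin ((n+1)/2) → ℝ) (i : Fin (n/2)) : ℝ :=
  (∑ m, Hf f y i m m)
    + (∑ m : Fin ((n+1)/2), if 2*(m:ℕ)+1 < n then Gf f y i m / y m else 0)
    + 2 * Gf f y i (dIdx i) / y (dIdx i)

def Pnorm (f : (Fin ((n+1)/2) → ℝ) → Fin (n/2) → ℝ)
    (y : Fin ((n+1)/2) → ℝ) (i : Fin (n/2)) : ℝ := ∑ m, Gf f y i m * Gf f y i m

lemma hder_Jac {y : Fin ((n+1)/2) → ℝ}
    (hy : ∀ m : Fin ((n+1)/2), 2*(m:ℕ)+1 < n → 0 < y m) :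
    HasFDerivAt (fun w => Jac n w)
      (lc (fun k => if 2*(k:ℕ)+1 < n then Jac n y / y k else 0)) y := by
  classical
  set g : Fin ((n+1)/2) → (Fin ((n+1)/2) → ℝ) → ℝ :=
    fun ℓ w => if 2*(ℓ:ℕ)+1 < n then w ℓ else 1 with hgdef
  set g' : Fin ((n+1)/2) → ((Fin ((n+1)/2) → ℝ) →L[ℝ] ℝ) :=
    fun ℓ => if 2*(ℓ:ℕ)+1 < n then (ContinuousLinearMap.proj ℓ) else 0 with hg'def
  have hg : ∀ ℓ ∈ (Finset.univ : Finset (Fin ((n+1)/2))), HasFDerivAt (g ℓ) (g' ℓ) y := by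
    intro ℓ _
    by_cases hℓ : 2*(ℓ:ℕ)+1 < n
    · have e1 : g ℓ = fun w => w ℓ := by funext w; simp [hgdef, hℓ]
      have e2 : g' ℓ = ContinuousLinearMap.proj ℓ := by simp [hg'def, hℓ]
      rw [e1, e2]
      exact (ContinuousLinearMap.proj ℓ : (Fin ((n+1)/2) → ℝ) →L[ℝ] ℝ).hasFDerivAt
    · have e1 : g ℓ = fun _ => 1 := by funext w; simp [hgdef, hℓ]
      have e2 : g' ℓ = 0 := by simp [hg'def, hℓ]
      rw [e1, e2]
      exact hasFDerivAt_const 1 y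
  have hmain := HasFDerivAt.finset_prod hg
  have hfun : (∏ ℓ ∈ Finset.univ, g ℓ ·) = fun w => Jac n w := by
    funext w; rw [Jac]
  rw [hfun] at hmain
  have h2 := hasFDerivAt_lc hmain
  convert h2 using 1
  apply lc_congr; intro k
  rw [ContinuousLinearMap.sum_apply]
  rw [Finset.sum_eq_single k]
  · rw [ContinuousLinearMap.smul_apply]
    by_cases hk : 2*(k:ℕ)+1 < n
    · rw [if_pos hk]
      have e2 : g' k (Pi.single k 1) = 1 := by simp [hg'def, hk]
      rw [e2, smul_eq_mul, mul_one]
      have hprod : Jac n y = y k * ∏ j ∈ Finset.univ.erase k, g j y := by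
        rw [Jac, ← Finset.mul_prod_erase Finset.univ _ (Finset.mem_univ k)]
        congr 1
        simp [hgdef, hk]
      rw [hprod]
      have hyk := (hy k hk).ne'
      field_simp
    · rw [if_neg hk]
      have e2 : g' k (Pi.single k 1) = 0 := by simp [hg'def, hk]
      rw [e2, smul_eq_mul, mul_zero]
  · intro m _ hm
    rw [ContinuousLinearMap.smul_apply]
    have e2 : g' m (Pi.single k 1) = 0 := by
      by_cases hmt : 2*(m:ℕ)+1 < n
      · simp [hg'def, hmt, Pi.single_apply, Ne.symm hm]
      · simp [hg'def, hmt]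
    rw [e2, smul_eq_mul, mul_zero]
  · simp

lemma ann_pos {y : Fin ((n+1)/2) → ℝ} (hy : y ∈ Ann n a b) :
    ∀ m : Fin ((n+1)/2), 2*(m:ℕ)+1 < n → 0 < y m := hy.2.2

lemma Jac_pos {y : Fin ((n+1)/2) → ℝ} (hy : y ∈ Ann n a b) : 0 < Jac n y := by
  rw [Jac]
  refine Finset.prod_pos fun ℓ _ => ?_
  by_cases hℓ : 2*(ℓ:ℕ)+1 < n
  · rw [if_pos hℓ]; exact hy.2.2 ℓ hℓ
  · rw [if_neg hℓ]; norm_num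

lemma divA_eq (hn : 2 ≤ n) (ha : 0 < a) (hab : a < b)
    (hA : ContDiffOn ℝ 1 (fun p : ℝ × ℝ × ℝ => A p.1 p.2.1 p.2.2)
        (Set.Icc a b ×ˢ Set.Ioi 0 ×ˢ Set.Ioi 0))
    (hf : ∀ i, ContDiffOn ℝ 2 (fun y => f y i) (closure (Ann n a b)))
    {y : Fin ((n+1)/2) → ℝ} (hy : y ∈ Ann n a b) (i : Fin (n/2)) :
    divA n A f i y
      = (y (dIdx i))^2 * Jac n y * (Acomp n A f y * muv n f y i + kap n A f y i) := by
  have hYpos := hy.2.2 (dIdx i) (dIdx_true i)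
  have hY := hYpos.ne'
  have hsq : HasFDerivAt (fun z : Fin ((n+1)/2) → ℝ => z (dIdx i)^2)
      (lc (fun k => 2 * y (dIdx i) * ind (dIdx i) k)) y := by
    have h1 : HasDerivAt (fun t : ℝ => t^2) (2 * y (dIdx i)) (y (dIdx i)) := by
      simpa using hasDerivAt_pow 2 (y (dIdx i))
    exact hder_comp1 h1 (hder_proj (dIdx i) y)
  have hAc : HasFDerivAt (Acomp n A f) (lc (amv n A f y)) y := by
    have h0 := (diffAt_Acomp hn ha hab hA hf hy).hasFDerivAt
    exact hasFDerivAt_lc h0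
  have hJ := hder_Jac (ann_pos hy)
  have hcoef0 := hder_mul (hder_mul hsq hAc) hJ
  have hcoefEq : (fun z : Fin ((n+1)/2) → ℝ => z (dIdx i)^2 * Acomp n A f z * Jac n z)
      = coefA n A f i := rfl
  rw [hcoefEq] at hcoef0
  have hstep : ∀ k : Fin ((n+1)/2),
      pdx (fun z => coefA n A f i z * pdx (fun w => f w i) z k) y k
        = coefA n A f i y * Hf f y i k k
          + Gf f y i k * ((y (dIdx i)^2 * Acomp n A f y)
              * (if 2*(k:ℕ)+1 < n then Jac n y / y k else 0)
            + Jac n y * (y (dIdx i)^2 * amv n A f y k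
              + Acomp n A f y * (2 * y (dIdx i) * ind (dIdx i) k))) := by
    intro k
    have h2 : HasFDerivAt (fun z => pdx (fun w => f w i) z k)
        (lc (fun m => Hf f y i k m)) y := by
      have h0 := (diffAt_pdf hf hy i k).hasFDerivAt
      exact hasFDerivAt_lc h0
    have hprod := hder_mul hcoef0 h2
    rw [pdx_of_hasFDerivAt hprod k]
    rw [Gf, Hf]
  rw [divA, Finset.sum_congr rfl (fun k _ => hstep k)]
  rw [Finset.sum_add_distrib]
  have e1 : ∑ k, coefA n A f i y * Hf f y i k k
      = coefA n A f i y * ∑ k, Hf f y i k k := by rw [Finset.mul_sum]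
  have e2 : ∑ k, Gf f y i k * ((y (dIdx i)^2 * Acomp n A f y)
        * (if 2*(k:ℕ)+1 < n then Jac n y / y k else 0)
      + Jac n y * (y (dIdx i)^2 * amv n A f y k
        + Acomp n A f y * (2 * y (dIdx i) * ind (dIdx i) k)))
      = (y (dIdx i)^2 * Acomp n A f y * Jac n y)
          * (∑ k : Fin ((n+1)/2), if 2*(k:ℕ)+1 < n then Gf f y i k / y k else 0)
        + Jac n y * y (dIdx i)^2 * (∑ k, amv n A f y k * Gf f y i k)
        + Acomp n A f y * Jac n y * 2 * y (dIdx i) * Gf f y i (dIdx i) := by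
    have hterm : ∀ k : Fin ((n+1)/2), Gf f y i k * ((y (dIdx i)^2 * Acomp n A f y)
          * (if 2*(k:ℕ)+1 < n then Jac n y / y k else 0)
        + Jac n y * (y (dIdx i)^2 * amv n A f y k
          + Acomp n A f y * (2 * y (dIdx i) * ind (dIdx i) k)))
        = (y (dIdx i)^2 * Acomp n A f y * Jac n y)
            * (if 2*(k:ℕ)+1 < n then Gf f y i k / y k else 0)
          + Jac n y * y (dIdx i)^2 * (amv n A f y k * Gf f y i k)
          + Acomp n A f y * Jac n y * 2 * y (dIdx i) * (ind (dIdx i) k * Gf f y i k) := by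
      intro k
      split_ifs with hk
      · ring
      · ring
    rw [Finset.sum_congr rfl (fun k _ => hterm k), Finset.sum_add_distrib,
      Finset.sum_add_distrib, ← Finset.mul_sum, ← Finset.mul_sum, ← Finset.mul_sum,
      sum_ind_mul]
  rw [e1, e2]
  rw [coefA, muv, kap]
  have hAeq : A (enr y) (enr y ^ 2) (xiArg n f y) = Acomp n A f y := rfl
  rw [hAeq]
  field_simp
  ring

lemma pde_coef (hn : 2 ≤ n) (ha : 0 < a) (hab : a < b)
    (hA : ContDiffOn ℝ 1 (fun p : ℝ × ℝ × ℝ => A p.1 p.2.1 p.2.2)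
        (Set.Icc a b ×ˢ Set.Ioi 0 ×ˢ Set.Ioi 0))
    (hf : ∀ i, ContDiffOn ℝ 2 (fun y => f y i) (closure (Ann n a b)))
    {y : Fin ((n+1)/2) → ℝ} (hy : y ∈ Ann n a b)
    (hpde : ∀ i, divA n A f i y = 0) (i : Fin (n/2)) :
    Acomp n A f y * muv n f y i + kap n A f y i = 0 := by
  have h1 := divA_eq hn ha hab hA hf hy i
  rw [hpde i] at h1
  have hYpos := hy.2.2 (dIdx i) (dIdx_true i)
  have hJ := Jac_pos hy
  have hfac : (y (dIdx i))^2 * Jac n y ≠ 0 := by positivity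
  rcases mul_eq_zero.mp h1.symm with h | h
  · exact absurd h hfac
  · exact h

end Pde


noncomputable section Lap
variable {n : ℕ}
variable {f : (Fin ((n+1)/2) → ℝ) → Fin (n/2) → ℝ} {u : (Fin n → ℝ) → Fin n → ℝ}
variable {a b : ℝ}

/-- coefficients of the derivative of `z ↦ EE z m j`. -/
def DEE (x : Fin n → ℝ) (m : Fin ((n+1)/2)) (j : Fin n) : Fin n → ℝ :=
  if 2*(m:ℕ)+1 < n ∧ ((j:ℕ) = 2*(m:ℕ) ∨ (j:ℕ) = 2*(m:ℕ)+1) then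
    (fun k => (yvar x m)⁻¹ * ind j k - x j * ((yvar x m)^2)⁻¹ * EE x m k)
  else fun _ => 0

lemma hder_EE {x : Fin n → ℝ} (hp : PosCtx x) (m : Fin ((n+1)/2)) (j : Fin n) :
    HasFDerivAt (fun z => EE z m j) (lc (DEE x m j)) x := by
  by_cases h : 2*(m:ℕ)+1 < n
  · by_cases hj : (j:ℕ) = 2*(m:ℕ) ∨ (j:ℕ) = 2*(m:ℕ)+1
    · have hEq : (fun z : Fin n → ℝ => EE z m j) = fun z => z j * (yvar z m)⁻¹ := by
        funext z; rw [EE, if_pos h, if_pos hj, div_eq_mul_inv]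
      rw [hEq]
      have hy := hp m h
      have hinv : HasDerivAt (fun t : ℝ => t⁻¹) (-((yvar x m)^2)⁻¹) (yvar x m) :=
        hasDerivAt_inv hy.ne'
      have hmain := hder_mul (hder_proj j x) (hder_comp1 hinv (hder_yvar hp m))
      convert hmain using 1
      apply lc_congr; intro k
      rw [DEE, if_pos ⟨h, hj⟩, ind]
      ring
    · have hEq : (fun z : Fin n → ℝ => EE z m j) = fun _ => 0 := by
        funext z; rw [EE, if_pos h, if_neg hj]
      rw [hEq]
      have hmain := hder_const (0:ℝ) x
      convert hmain using 1
      apply lc_congr; intro k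
      rw [DEE, if_neg (by tauto)]
  · have hEq : (fun z : Fin n → ℝ => EE z m j)
        = fun _ => (if (j:ℕ) = n-1 then (1:ℝ) else 0) := by
      funext z; rw [EE, if_neg h]
    rw [hEq]
    have hmain := hder_const (if (j:ℕ) = n-1 then (1:ℝ) else 0) x
    convert hmain using 1
    apply lc_congr; intro k
    rw [DEE, if_neg (by tauto)]

lemma sum_DEE_diag {x : Fin n → ℝ} (hp : PosCtx x) (m : Fin ((n+1)/2)) :
    ∑ k, DEE x m k k = if 2*(m:ℕ)+1 < n then (yvar x m)⁻¹ else 0 := by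
  by_cases h : 2*(m:ℕ)+1 < n
  · rw [if_pos h]
    set k1 : Fin n := ⟨2*(m:ℕ), by omega⟩ with hk1
    set k2 : Fin n := ⟨2*(m:ℕ)+1, h⟩ with hk2
    have hk12 : k1 ≠ k2 := by
      intro hc
      have h2 := congrArg Fin.val hc
      rw [hk1, hk2] at h2
      simp at h2
    rw [Finset.sum_eq_add_of_mem k1 k2 (Finset.mem_univ _) (Finset.mem_univ _) hk12]
    · have hy := hp m h
      have e1 : DEE x m k1 k1 = (yvar x m)⁻¹ - x k1 * ((yvar x m)^2)⁻¹ * (x k1 / yvar x m) := by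
        rw [DEE, if_pos ⟨h, Or.inl rfl⟩]
        rw [EE, if_pos h, if_pos (Or.inl rfl), ind, if_pos rfl]
        ring
      have e2 : DEE x m k2 k2 = (yvar x m)⁻¹ - x k2 * ((yvar x m)^2)⁻¹ * (x k2 / yvar x m) := by
        rw [DEE, if_pos ⟨h, Or.inr rfl⟩]
        rw [EE, if_pos h, if_pos (Or.inr rfl), ind, if_pos rfl]
        ring
      rw [e1, e2]
      have hsq : x k1^2 + x k2^2 = yvar x m ^2 := (yvar_sq h).symm
      have h1 : (yvar x m ^2) * (yvar x m ^2)⁻¹ = 1 := mul_inv_cancel₀ (by positivity)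
      linear_combination (-(yvar x m)⁻¹ * (yvar x m ^2)⁻¹) * hsq + (-(yvar x m)⁻¹) * h1
    · intro k _ hk
      have hv1 : (k:ℕ) ≠ 2*(m:ℕ) := fun hc => hk.1 (Fin.ext (by rw [hk1] at *; exact hc))
      have hv2 : (k:ℕ) ≠ 2*(m:ℕ)+1 := fun hc => hk.2 (Fin.ext (by rw [hk2] at *; exact hc))
      rw [DEE, if_neg (by tauto)]
  · rw [if_neg h]
    refine Finset.sum_eq_zero fun k _ => ?_
    rw [DEE, if_neg (by tauto)]

lemma sum_vecE_mul_EE {x : Fin n → ℝ} (hp : PosCtx x) (c : Fin ((n+1)/2) → ℝ)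
    (m : Fin ((n+1)/2)) : ∑ k, vecE x c k * EE x m k = c m := by
  have hEE : ∀ k, EE x m k = vecE x (fun m' => ind m m') k := by
    intro k
    rw [vecE, Finset.sum_eq_single m]
    · rw [ind, if_pos rfl, one_mul]
    · intro m' _ hm; rw [ind, if_neg hm, zero_mul]
    · simp
  rw [Finset.sum_congr rfl (fun k _ => by rw [hEE k]), sum_vecE_mul_vecE hp]
  rw [Finset.sum_eq_single m]
  · rw [ind, if_pos rfl, mul_one]
  · intro m' _ hm; rw [ind, if_neg hm, mul_zero]
  · simp

lemma lap_tI (hu : ∀ z, u z = Qf f (yv z) *ᵥ z)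
    (hf : ∀ i, ContDiffOn ℝ 2 (fun y => f y i) (closure (Ann n a b)))
    {x : Fin n → ℝ} (hx : yv x ∈ Ann n a b) (ℓ : Fin (n/2)) :
    lapv u x (tI ℓ) = qa f x ℓ * muv n f (yv x) ℓ - qb f x ℓ * Pnorm f (yv x) ℓ := by
  have hp := posctx_of_ann hx
  have hcosf : HasFDerivAt (fun z => cosf f z ℓ)
      (lc (fun k => -Real.sin (f (yv x) ℓ) * Vv f x ℓ k)) x :=
    hder_comp1 (Real.hasDerivAt_cos (f (yv x) ℓ)) (hder_f hf hx ℓ)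
  have hsinf : HasFDerivAt (fun z => sinf f z ℓ)
      (lc (fun k => Real.cos (f (yv x) ℓ) * Vv f x ℓ k)) x :=
    hder_comp1 (Real.hasDerivAt_sin (f (yv x) ℓ)) (hder_f hf hx ℓ)
  have hqa : HasFDerivAt (fun z => qa f z ℓ)
      (lc (fun k => -(Real.sin (f (yv x) ℓ) * ind (tI ℓ) k
            + x (tI ℓ) * (Real.cos (f (yv x) ℓ) * Vv f x ℓ k))
        - (Real.cos (f (yv x) ℓ) * ind (tJ ℓ) k
            + x (tJ ℓ) * (-Real.sin (f (yv x) ℓ) * Vv f x ℓ k)))) x :=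
    hder_sub (hder_neg (hder_mul hsinf (hder_proj (tI ℓ) x)))
      (hder_mul hcosf (hder_proj (tJ ℓ) x))
  have hVv : ∀ j, HasFDerivAt (fun z => Vv f z ℓ j)
      (lc (fun k => ∑ m, (Gf f (yv x) ℓ m * DEE x m j k
        + EE x m j * vecE x (Hf f (yv x) ℓ m) k))) x := by
    intro j
    exact hder_sum Finset.univ (fun m _ => hder_mul (hder_pdf hf hx ℓ m) (hder_EE hp m j))
  have hPhi : ∀ j, HasFDerivAt
      (fun z => cosf f z ℓ * ind (tI ℓ) j - sinf f z ℓ * ind (tJ ℓ) j + qa f z ℓ * Vv f z ℓ j)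
      (lc (fun k =>
        ((cosf f x ℓ * 0 + ind (tI ℓ) j * (-Real.sin (f (yv x) ℓ) * Vv f x ℓ k))
          - (sinf f x ℓ * 0 + ind (tJ ℓ) j * (Real.cos (f (yv x) ℓ) * Vv f x ℓ k)))
        + (qa f x ℓ * (∑ m, (Gf f (yv x) ℓ m * DEE x m j k
              + EE x m j * vecE x (Hf f (yv x) ℓ m) k))
           + Vv f x ℓ j * (-(Real.sin (f (yv x) ℓ) * ind (tI ℓ) k
                + x (tI ℓ) * (Real.cos (f (yv x) ℓ) * Vv f x ℓ k))
              - (Real.cos (f (yv x) ℓ) * ind (tJ ℓ) k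
                + x (tJ ℓ) * (-Real.sin (f (yv x) ℓ) * Vv f x ℓ k)))))) x :=
    fun j => hder_add
      (hder_sub (hder_mul hcosf (hder_const (ind (tI ℓ) j) x))
        (hder_mul hsinf (hder_const (ind (tJ ℓ) j) x)))
      (hder_mul hqa (hVv j))
  have hstep : ∀ j, pdx (fun z => pdx (fun w => u w (tI ℓ)) z j) x j
      = ((cosf f x ℓ * 0 + ind (tI ℓ) j * (-Real.sin (f (yv x) ℓ) * Vv f x ℓ j))
          - (sinf f x ℓ * 0 + ind (tJ ℓ) j * (Real.cos (f (yv x) ℓ) * Vv f x ℓ j)))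
        + (qa f x ℓ * (∑ m, (Gf f (yv x) ℓ m * DEE x m j j
              + EE x m j * vecE x (Hf f (yv x) ℓ m) j))
           + Vv f x ℓ j * (-(Real.sin (f (yv x) ℓ) * ind (tI ℓ) j
                + x (tI ℓ) * (Real.cos (f (yv x) ℓ) * Vv f x ℓ j))
              - (Real.cos (f (yv x) ℓ) * ind (tJ ℓ) j
                + x (tJ ℓ) * (-Real.sin (f (yv x) ℓ) * Vv f x ℓ j)))) := by
    intro j
    have hev : (fun z => pdx (fun w => u w (tI ℓ)) z j) =ᶠ[nhds x]
        (fun z => cosf f z ℓ * ind (tI ℓ) j - sinf f z ℓ * ind (tJ ℓ) j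
          + qa f z ℓ * Vv f z ℓ j) :=
      Filter.eventuallyEq_of_mem (uset_mem_nhds hx) (fun z hz => by
        rw [pdx_of_hasFDerivAt (hder_u_tI hu hf hz ℓ) j])
    rw [pdx, hev.fderiv_eq, ← pdx, pdx_of_hasFDerivAt (hPhi j) j]
  have hlap : lapv u x (tI ℓ) = ∑ j, pdx (fun z => pdx (fun w => u w (tI ℓ)) z j) x j := rfl
  rw [hlap, Finset.sum_congr rfl (fun j _ => hstep j)]
  -- split the sum
  have hterm : ∀ j, (((cosf f x ℓ * 0 + ind (tI ℓ) j * (-Real.sin (f (yv x) ℓ) * Vv f x ℓ j))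
          - (sinf f x ℓ * 0 + ind (tJ ℓ) j * (Real.cos (f (yv x) ℓ) * Vv f x ℓ j)))
        + (qa f x ℓ * (∑ m, (Gf f (yv x) ℓ m * DEE x m j j
              + EE x m j * vecE x (Hf f (yv x) ℓ m) j))
           + Vv f x ℓ j * (-(Real.sin (f (yv x) ℓ) * ind (tI ℓ) j
                + x (tI ℓ) * (Real.cos (f (yv x) ℓ) * Vv f x ℓ j))
              - (Real.cos (f (yv x) ℓ) * ind (tJ ℓ) j
                + x (tJ ℓ) * (-Real.sin (f (yv x) ℓ) * Vv f x ℓ j)))))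
      = ind (tI ℓ) j * (-Real.sin (f (yv x) ℓ) * Vv f x ℓ j
            + -Real.sin (f (yv x) ℓ) * Vv f x ℓ j)
        + ind (tJ ℓ) j * (-(Real.cos (f (yv x) ℓ) * Vv f x ℓ j)
            + -(Real.cos (f (yv x) ℓ) * Vv f x ℓ j))
        + (x (tJ ℓ) * Real.sin (f (yv x) ℓ) - x (tI ℓ) * Real.cos (f (yv x) ℓ))
            * (Vv f x ℓ j * Vv f x ℓ j)
        + qa f x ℓ * (∑ m, (Gf f (yv x) ℓ m * DEE x m j j
              + EE x m j * vecE x (Hf f (yv x) ℓ m) j)) := by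
    intro j
    rw [ind, ind]
    split_ifs <;> ring
  rw [Finset.sum_congr rfl (fun j _ => hterm j)]
  rw [Finset.sum_add_distrib, Finset.sum_add_distrib, Finset.sum_add_distrib]
  rw [sum_ind_mul (tI ℓ) (fun j => -Real.sin (f (yv x) ℓ) * Vv f x ℓ j
        + -Real.sin (f (yv x) ℓ) * Vv f x ℓ j),
      sum_ind_mul (tJ ℓ) (fun j => -(Real.cos (f (yv x) ℓ) * Vv f x ℓ j)
        + -(Real.cos (f (yv x) ℓ) * Vv f x ℓ j)),
      ← Finset.mul_sum, ← Finset.mul_sum]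
  -- the double sum
  have hdsum : ∑ j, ∑ m, (Gf f (yv x) ℓ m * DEE x m j j
        + EE x m j * vecE x (Hf f (yv x) ℓ m) j)
      = ∑ m, (Gf f (yv x) ℓ m * (if 2*(m:ℕ)+1 < n then (yvar x m)⁻¹ else 0)
          + Hf f (yv x) ℓ m m) := by
    rw [Finset.sum_comm]
    refine Finset.sum_congr rfl fun m _ => ?_
    rw [Finset.sum_add_distrib, ← Finset.mul_sum, sum_DEE_diag hp m]
    congr 1
    rw [Finset.sum_congr rfl (fun j _ => mul_comm (EE x m j) (vecE x (Hf f (yv x) ℓ m) j)),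
      sum_vecE_mul_EE hp]
  rw [hdsum]
  -- final algebra
  have hVI : Vv f x ℓ (tI ℓ) = Gf f (yv x) ℓ (dIdx ℓ) * (x (tI ℓ) / yvar x (dIdx ℓ)) :=
    vecE_tI x _ ℓ
  have hVJ : Vv f x ℓ (tJ ℓ) = Gf f (yv x) ℓ (dIdx ℓ) * (x (tJ ℓ) / yvar x (dIdx ℓ)) :=
    vecE_tJ x _ ℓ
  have hy := hp (dIdx ℓ) (dIdx_true ℓ)
  have hsplit2 : ∑ m, (Gf f (yv x) ℓ m * (if 2*(m:ℕ)+1 < n then (yvar x m)⁻¹ else 0)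
        + Hf f (yv x) ℓ m m)
      = (∑ m : Fin ((n+1)/2), if 2*(m:ℕ)+1 < n then Gf f (yv x) ℓ m / yv x m else 0)
        + ∑ m, Hf f (yv x) ℓ m m := by
    rw [Finset.sum_add_distrib]
    congr 1
    refine Finset.sum_congr rfl fun m _ => ?_
    have : yvar x m = yv x m := rfl
    rw [this]
    split_ifs with hm
    · rw [div_eq_mul_inv]
    · rw [mul_zero]
  rw [hsplit2, muv, Pnorm, ← sum_Vv_mul_Vv hp ℓ ℓ, hVI, hVJ, qa, qb, sinf, cosf]
  have hyy : yvar x (dIdx ℓ) = yv x (dIdx ℓ) := rfl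
  rw [hyy] at hy ⊢
  field_simp
  ring

lemma lap_tJ (hu : ∀ z, u z = Qf f (yv z) *ᵥ z)
    (hf : ∀ i, ContDiffOn ℝ 2 (fun y => f y i) (closure (Ann n a b)))
    {x : Fin n → ℝ} (hx : yv x ∈ Ann n a b) (ℓ : Fin (n/2)) :
    lapv u x (tJ ℓ) = qb f x ℓ * muv n f (yv x) ℓ + qa f x ℓ * Pnorm f (yv x) ℓ := by
  have hp := posctx_of_ann hx
  have hcosf : HasFDerivAt (fun z => cosf f z ℓ)
      (lc (fun k => -Real.sin (f (yv x) ℓ) * Vv f x ℓ k)) x :=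
    hder_comp1 (Real.hasDerivAt_cos (f (yv x) ℓ)) (hder_f hf hx ℓ)
  have hsinf : HasFDerivAt (fun z => sinf f z ℓ)
      (lc (fun k => Real.cos (f (yv x) ℓ) * Vv f x ℓ k)) x :=
    hder_comp1 (Real.hasDerivAt_sin (f (yv x) ℓ)) (hder_f hf hx ℓ)
  have hqb : HasFDerivAt (fun z => qb f z ℓ)
      (lc (fun k => (Real.cos (f (yv x) ℓ) * ind (tI ℓ) k
            + x (tI ℓ) * (-Real.sin (f (yv x) ℓ) * Vv f x ℓ k))
        - (Real.sin (f (yv x) ℓ) * ind (tJ ℓ) k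
            + x (tJ ℓ) * (Real.cos (f (yv x) ℓ) * Vv f x ℓ k)))) x :=
    hder_sub (hder_mul hcosf (hder_proj (tI ℓ) x))
      (hder_mul hsinf (hder_proj (tJ ℓ) x))
  have hVv : ∀ j, HasFDerivAt (fun z => Vv f z ℓ j)
      (lc (fun k => ∑ m, (Gf f (yv x) ℓ m * DEE x m j k
        + EE x m j * vecE x (Hf f (yv x) ℓ m) k))) x := by
    intro j
    exact hder_sum Finset.univ (fun m _ => hder_mul (hder_pdf hf hx ℓ m) (hder_EE hp m j))
  have hPhi : ∀ j, HasFDerivAt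
      (fun z => sinf f z ℓ * ind (tI ℓ) j + cosf f z ℓ * ind (tJ ℓ) j + qb f z ℓ * Vv f z ℓ j)
      (lc (fun k =>
        ((sinf f x ℓ * 0 + ind (tI ℓ) j * (Real.cos (f (yv x) ℓ) * Vv f x ℓ k))
          + (cosf f x ℓ * 0 + ind (tJ ℓ) j * (-Real.sin (f (yv x) ℓ) * Vv f x ℓ k)))
        + (qb f x ℓ * (∑ m, (Gf f (yv x) ℓ m * DEE x m j k
              + EE x m j * vecE x (Hf f (yv x) ℓ m) k))
           + Vv f x ℓ j * ((Real.cos (f (yv x) ℓ) * ind (tI ℓ) k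
                + x (tI ℓ) * (-Real.sin (f (yv x) ℓ) * Vv f x ℓ k))
              - (Real.sin (f (yv x) ℓ) * ind (tJ ℓ) k
                + x (tJ ℓ) * (Real.cos (f (yv x) ℓ) * Vv f x ℓ k)))))) x :=
    fun j => hder_add
      (hder_add (hder_mul hsinf (hder_const (ind (tI ℓ) j) x))
        (hder_mul hcosf (hder_const (ind (tJ ℓ) j) x)))
      (hder_mul hqb (hVv j))
  have hstep : ∀ j, pdx (fun z => pdx (fun w => u w (tJ ℓ)) z j) x j
      = ((sinf f x ℓ * 0 + ind (tI ℓ) j * (Real.cos (f (yv x) ℓ) * Vv f x ℓ j))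
          + (cosf f x ℓ * 0 + ind (tJ ℓ) j * (-Real.sin (f (yv x) ℓ) * Vv f x ℓ j)))
        + (qb f x ℓ * (∑ m, (Gf f (yv x) ℓ m * DEE x m j j
              + EE x m j * vecE x (Hf f (yv x) ℓ m) j))
           + Vv f x ℓ j * ((Real.cos (f (yv x) ℓ) * ind (tI ℓ) j
                + x (tI ℓ) * (-Real.sin (f (yv x) ℓ) * Vv f x ℓ j))
              - (Real.sin (f (yv x) ℓ) * ind (tJ ℓ) j
                + x (tJ ℓ) * (Real.cos (f (yv x) ℓ) * Vv f x ℓ j)))) := by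
    intro j
    have hev : (fun z => pdx (fun w => u w (tJ ℓ)) z j) =ᶠ[nhds x]
        (fun z => sinf f z ℓ * ind (tI ℓ) j + cosf f z ℓ * ind (tJ ℓ) j
          + qb f z ℓ * Vv f z ℓ j) :=
      Filter.eventuallyEq_of_mem (uset_mem_nhds hx) (fun z hz => by
        rw [pdx_of_hasFDerivAt (hder_u_tJ hu hf hz ℓ) j])
    rw [pdx, hev.fderiv_eq, ← pdx, pdx_of_hasFDerivAt (hPhi j) j]
  have hlap : lapv u x (tJ ℓ) = ∑ j, pdx (fun z => pdx (fun w => u w (tJ ℓ)) z j) x j := rfl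
  rw [hlap, Finset.sum_congr rfl (fun j _ => hstep j)]
  have hterm : ∀ j, (((sinf f x ℓ * 0 + ind (tI ℓ) j * (Real.cos (f (yv x) ℓ) * Vv f x ℓ j))
          + (cosf f x ℓ * 0 + ind (tJ ℓ) j * (-Real.sin (f (yv x) ℓ) * Vv f x ℓ j)))
        + (qb f x ℓ * (∑ m, (Gf f (yv x) ℓ m * DEE x m j j
              + EE x m j * vecE x (Hf f (yv x) ℓ m) j))
           + Vv f x ℓ j * ((Real.cos (f (yv x) ℓ) * ind (tI ℓ) j
                + x (tI ℓ) * (-Real.sin (f (yv x) ℓ) * Vv f x ℓ j))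
              - (Real.sin (f (yv x) ℓ) * ind (tJ ℓ) j
                + x (tJ ℓ) * (Real.cos (f (yv x) ℓ) * Vv f x ℓ j)))))
      = ind (tI ℓ) j * (Real.cos (f (yv x) ℓ) * Vv f x ℓ j
            + Real.cos (f (yv x) ℓ) * Vv f x ℓ j)
        + ind (tJ ℓ) j * (-(Real.sin (f (yv x) ℓ) * Vv f x ℓ j)
            + -(Real.sin (f (yv x) ℓ) * Vv f x ℓ j))
        + (-(x (tI ℓ) * Real.sin (f (yv x) ℓ)) - x (tJ ℓ) * Real.cos (f (yv x) ℓ))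
            * (Vv f x ℓ j * Vv f x ℓ j)
        + qb f x ℓ * (∑ m, (Gf f (yv x) ℓ m * DEE x m j j
              + EE x m j * vecE x (Hf f (yv x) ℓ m) j)) := by
    intro j
    rw [ind, ind]
    split_ifs <;> ring
  rw [Finset.sum_congr rfl (fun j _ => hterm j)]
  rw [Finset.sum_add_distrib, Finset.sum_add_distrib, Finset.sum_add_distrib]
  rw [sum_ind_mul (tI ℓ) (fun j => Real.cos (f (yv x) ℓ) * Vv f x ℓ j
        + Real.cos (f (yv x) ℓ) * Vv f x ℓ j),
      sum_ind_mul (tJ ℓ) (fun j => -(Real.sin (f (yv x) ℓ) * Vv f x ℓ j)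
        + -(Real.sin (f (yv x) ℓ) * Vv f x ℓ j)),
      ← Finset.mul_sum, ← Finset.mul_sum]
  have hdsum : ∑ j, ∑ m, (Gf f (yv x) ℓ m * DEE x m j j
        + EE x m j * vecE x (Hf f (yv x) ℓ m) j)
      = ∑ m, (Gf f (yv x) ℓ m * (if 2*(m:ℕ)+1 < n then (yvar x m)⁻¹ else 0)
          + Hf f (yv x) ℓ m m) := by
    rw [Finset.sum_comm]
    refine Finset.sum_congr rfl fun m _ => ?_
    rw [Finset.sum_add_distrib, ← Finset.mul_sum, sum_DEE_diag hp m]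
    congr 1
    rw [Finset.sum_congr rfl (fun j _ => mul_comm (EE x m j) (vecE x (Hf f (yv x) ℓ m) j)),
      sum_vecE_mul_EE hp]
  rw [hdsum]
  have hVI : Vv f x ℓ (tI ℓ) = Gf f (yv x) ℓ (dIdx ℓ) * (x (tI ℓ) / yvar x (dIdx ℓ)) :=
    vecE_tI x _ ℓ
  have hVJ : Vv f x ℓ (tJ ℓ) = Gf f (yv x) ℓ (dIdx ℓ) * (x (tJ ℓ) / yvar x (dIdx ℓ)) :=
    vecE_tJ x _ ℓ
  have hy := hp (dIdx ℓ) (dIdx_true ℓ)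
  have hsplit2 : ∑ m, (Gf f (yv x) ℓ m * (if 2*(m:ℕ)+1 < n then (yvar x m)⁻¹ else 0)
        + Hf f (yv x) ℓ m m)
      = (∑ m : Fin ((n+1)/2), if 2*(m:ℕ)+1 < n then Gf f (yv x) ℓ m / yv x m else 0)
        + ∑ m, Hf f (yv x) ℓ m m := by
    rw [Finset.sum_add_distrib]
    congr 1
    refine Finset.sum_congr rfl fun m _ => ?_
    have : yvar x m = yv x m := rfl
    rw [this]
    split_ifs with hm
    · rw [div_eq_mul_inv]
    · rw [mul_zero]
  rw [hsplit2, muv, Pnorm, ← sum_Vv_mul_Vv hp ℓ ℓ, hVI, hVJ, qa, qb, sinf, cosf]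
  have hyy : yvar x (dIdx ℓ) = yv x (dIdx ℓ) := rfl
  rw [hyy] at hy ⊢
  field_simp
  ring

lemma lap_odd (hu : ∀ z, u z = Qf f (yv z) *ᵥ z)
    {x : Fin n → ℝ} {i : Fin n} (hi : ¬((i:ℕ) < 2*(n/2))) :
    lapv u x i = 0 := by
  have hlap : lapv u x i = ∑ j, pdx (fun z => pdx (fun w => u w i) z j) x j := rfl
  rw [hlap]
  refine Finset.sum_eq_zero fun j _ => ?_
  have hEq : (fun z => pdx (fun w => u w i) z j) = fun _ => ind i j := by
    funext z
    rw [pdx_of_hasFDerivAt (hder_u_odd hu hi) j]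
  rw [hEq]
  exact pdx_of_hasFDerivAt (hder_const (ind i j) x) j

end Lap


noncomputable section FinalHelp
variable {n : ℕ}

lemma sum_ind_mul' (j : Fin n) (v : Fin n → ℝ) : ∑ i, ind i j * v i = v j := by
  rw [Finset.sum_eq_single j]
  · rw [ind, if_pos rfl, one_mul]
  · intro k _ hk; rw [ind, if_neg (Ne.symm hk), zero_mul]
  · simp

lemma wv_eq (x : Fin n → ℝ) (ℓ : Fin (n/2)) (j : Fin n) :
    wv x (dIdx ℓ) j = ind (tI ℓ) j * x (tI ℓ) + ind (tJ ℓ) j * x (tJ ℓ) := by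
  by_cases h1 : j = tI ℓ
  · subst h1
    rw [wv, if_pos (by show ((tI ℓ : Fin n):ℕ)/2 = (ℓ:ℕ); rw [tI_val]; omega),
      ind, ind, if_pos rfl, if_neg (tI_ne_tJ ℓ)]
    ring
  · by_cases h2 : j = tJ ℓ
    · subst h2
      rw [wv, if_pos (by show ((tJ ℓ : Fin n):ℕ)/2 = (ℓ:ℕ); rw [tJ_val]; omega),
        ind, ind, if_neg (Ne.symm (tI_ne_tJ ℓ)), if_pos rfl]
      ring
    · have hv1 : (j:ℕ) ≠ 2*(ℓ:ℕ) := fun hc => h1 (Fin.ext (by rw [tI_val]; omega))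
      have hv2 : (j:ℕ) ≠ 2*(ℓ:ℕ)+1 := fun hc => h2 (Fin.ext (by rw [tJ_val]; omega))
      rw [wv, if_neg (by show ¬((j:ℕ)/2 = (ℓ:ℕ)); omega), ind, ind, if_neg h1, if_neg h2]
      ring

lemma matcalc (M : Matrix (Fin n) (Fin n) ℝ) (g L U : Fin n → ℝ) (av bv : ℝ) (j : Fin n) :
    ((Mᵀ * M) *ᵥ g + av • (Mᵀ *ᵥ L) + bv • (Mᵀ *ᵥ U)) j
      = ∑ i, M i j * ((∑ k, M i k * g k) + av * L i + bv * U i) := by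
  simp only [Pi.add_apply, Pi.smul_apply, smul_eq_mul, Matrix.mulVec, dotProduct,
    Matrix.mul_apply, Matrix.transpose_apply]
  have e1 : ∑ k, (∑ i, M i j * M i k) * g k = ∑ i, M i j * ∑ k, M i k * g k := by
    have h1 : ∀ k, (∑ i, M i j * M i k) * g k = ∑ i, M i j * (M i k * g k) := by
      intro k; rw [Finset.sum_mul]; exact Finset.sum_congr rfl fun i _ => by ring
    rw [Finset.sum_congr rfl fun k _ => h1 k, Finset.sum_comm]
    exact Finset.sum_congr rfl fun i _ => (Finset.mul_sum _ _ _).symm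
  have e2 : ∀ i, M i j * ((∑ k, M i k * g k) + av * L i + bv * U i)
      = M i j * (∑ k, M i k * g k) + av * (M i j * L i) + bv * (M i j * U i) := fun i => by ring
  rw [Finset.sum_congr rfl fun i _ => e2 i, Finset.sum_add_distrib, Finset.sum_add_distrib,
    ← Finset.mul_sum, ← Finset.mul_sum, e1]

end FinalHelp

/-- Proposition 4.4: if `f` of class `C²` solves the unconstrained
auxiliary system, then for the whirl map `u` associated with `Q = Q[f]`,
`𝓛[u;A,B] = ∇A + Bx − Σ_i A|∇f_i|² w^i`, with `A, B` evaluated at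
`(r,s,ξ) = (‖y‖, ‖y‖², n + Σ_j y_j²|∇f_j|²)`. -/
theorem stmt12 (n : ℕ) (hn : 2 ≤ n) (a b : ℝ) (ha : 0 < a) (hab : a < b)
    (A B : ℝ → ℝ → ℝ → ℝ)
    (hA : ContDiffOn ℝ 1 (fun p : ℝ × ℝ × ℝ => A p.1 p.2.1 p.2.2)
        (Set.Icc a b ×ˢ Set.Ioi 0 ×ˢ Set.Ioi 0))
    (hB : ContDiffOn ℝ 1 (fun p : ℝ × ℝ × ℝ => B p.1 p.2.1 p.2.2)
        (Set.Icc a b ×ˢ Set.Ioi 0 ×ˢ Set.Ioi 0))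
    (f : (Fin ((n+1)/2) → ℝ) → Fin (n/2) → ℝ)
    (hf : ∀ i, ContDiffOn ℝ 2 (fun y => f y i) (closure (Ann n a b)))
    (hpde : ∀ y ∈ Ann n a b, ∀ i, divA n A f i y = 0)
    (u : (Fin n → ℝ) → Fin n → ℝ)
    (hu : ∀ z, u z = Qf f (yv z) *ᵥ z)
    (x : Fin n → ℝ) (hx : yv x ∈ Ann n a b) :
    let y0 := yv x
    LAB A B u x
      = gradx (fun z => A (enr z) (norm2 (u z)) (frob2 (gradm u z))) x
        + B (enr y0) ((enr y0)^2) (xiArg n f y0) • x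
        - ∑ i : Fin (n/2),
            (A (enr y0) ((enr y0)^2) (xiArg n f y0)
              * norm2 (gradx (fun w => f w i) y0)) • wv x (dIdx i) := by
  intro y0
  have hp := posctx_of_ann hx
  have hpdeℓ : ∀ ℓ : Fin (n/2),
      Acomp n A f (yv x) * muv n f (yv x) ℓ + kap n A f (yv x) ℓ = 0 :=
    fun ℓ => pde_coef hn ha hab hA hf hx (fun i => hpde (yv x) hx i) ℓ
  have hAv : A (enr x) (norm2 (u x)) (frob2 (gradm u x)) = Acomp n A f (yv x) := by
    rw [Acomp, enr_yv, norm2_u_eq hu, norm2_eq_enr_sq, frob2_gradm hu hf hx]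
  have hBv : B (enr x) (norm2 (u x)) (frob2 (gradm u x))
      = B (enr (yv x)) ((enr (yv x))^2) (xiArg n f (yv x)) := by
    rw [enr_yv, norm2_u_eq hu, norm2_eq_enr_sq, frob2_gradm hu hf hx]
  have hgx : gradx (fun z => A (enr z) (norm2 (u z)) (frob2 (gradm u z))) x
      = vecE x (amv n A f (yv x)) := by
    funext k
    exact hder_gA hn ha hab hA hf hu hx k
  have hPn : ∀ ℓ : Fin (n/2), norm2 (gradx (fun w => f w ℓ) (yv x)) = Pnorm f (yv x) ℓ :=
    fun ℓ => norm2_gradx_eq (yv x) ℓ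
  show LAB A B u x
      = gradx (fun z => A (enr z) (norm2 (u z)) (frob2 (gradm u z))) x
        + B (enr (yv x)) ((enr (yv x))^2) (xiArg n f (yv x)) • x
        - ∑ i : Fin (n/2),
            (Acomp n A f (yv x) * norm2 (gradx (fun w => f w i) (yv x))) • wv x (dIdx i)
  funext j
  -- abbreviations (as plain terms)
  have hkapv : ∀ ℓ : Fin (n/2),
      (∑ k, Vv f x ℓ k * vecE x (amv n A f (yv x)) k) = kap n A f (yv x) ℓ := by
    intro ℓ
    rw [Vv, sum_vecE_mul_vecE hp, kap]
    exact Finset.sum_congr rfl fun m _ => mul_comm _ _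
  have hWtI : ∀ ℓ : Fin (n/2),
      (∑ k, gradm u x (tI ℓ) k * vecE x (amv n A f (yv x)) k)
        + Acomp n A f (yv x) * lapv u x (tI ℓ)
        + B (enr (yv x)) ((enr (yv x))^2) (xiArg n f (yv x)) * u x (tI ℓ)
      = cosf f x ℓ * vecE x (amv n A f (yv x)) (tI ℓ)
        + (-sinf f x ℓ) * vecE x (amv n A f (yv x)) (tJ ℓ)
        + (B (enr (yv x)) ((enr (yv x))^2) (xiArg n f (yv x))
            - Acomp n A f (yv x) * Pnorm f (yv x) ℓ) * qb f x ℓ := by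
    intro ℓ
    rw [Finset.sum_congr rfl (fun k _ => by rw [gradm_row_tI hu hf hx ℓ k]),
      sum_rowc_mul, lap_tI hu hf hx ℓ, u_x_tI hu, hkapv ℓ]
    linear_combination (qa f x ℓ) * hpdeℓ ℓ
  have hWtJ : ∀ ℓ : Fin (n/2),
      (∑ k, gradm u x (tJ ℓ) k * vecE x (amv n A f (yv x)) k)
        + Acomp n A f (yv x) * lapv u x (tJ ℓ)
        + B (enr (yv x)) ((enr (yv x))^2) (xiArg n f (yv x)) * u x (tJ ℓ)
      = sinf f x ℓ * vecE x (amv n A f (yv x)) (tI ℓ)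
        + cosf f x ℓ * vecE x (amv n A f (yv x)) (tJ ℓ)
        - (B (enr (yv x)) ((enr (yv x))^2) (xiArg n f (yv x))
            - Acomp n A f (yv x) * Pnorm f (yv x) ℓ) * qa f x ℓ := by
    intro ℓ
    rw [Finset.sum_congr rfl (fun k _ => by rw [gradm_row_tJ hu hf hx ℓ k]),
      sum_rowc_mul, lap_tJ hu hf hx ℓ, u_x_tJ hu, hkapv ℓ]
    linear_combination (qb f x ℓ) * hpdeℓ ℓ
  -- blockwise identities
  have hsc : ∀ ℓ : Fin (n/2), sinf f x ℓ^2 + cosf f x ℓ^2 = 1 :=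
    fun ℓ => Real.sin_sq_add_cos_sq (f (yv x) ℓ)
  have hca : ∀ ℓ : Fin (n/2), cosf f x ℓ * qa f x ℓ + sinf f x ℓ * qb f x ℓ = -x (tJ ℓ) := by
    intro ℓ
    rw [qa, qb, sinf, cosf]
    linear_combination (-(x (tJ ℓ)))*(Real.sin_sq_add_cos_sq (f (yv x) ℓ))
  have hcb : ∀ ℓ : Fin (n/2), cosf f x ℓ * qb f x ℓ - sinf f x ℓ * qa f x ℓ = x (tI ℓ) := by
    intro ℓ
    rw [qa, qb, sinf, cosf]
    linear_combination (x (tI ℓ))*(Real.sin_sq_add_cos_sq (f (yv x) ℓ))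
  have hgcross : ∀ ℓ : Fin (n/2),
      -(x (tJ ℓ)) * vecE x (amv n A f (yv x)) (tI ℓ)
        + x (tI ℓ) * vecE x (amv n A f (yv x)) (tJ ℓ) = 0 := by
    intro ℓ
    rw [vecE_tI, vecE_tJ]
    have hy := hp (dIdx ℓ) (dIdx_true ℓ)
    field_simp
    ring
  -- the common block form
  have hL : LAB A B u x j
      = (∑ ℓ : Fin (n/2),
          (ind (tI ℓ) j * (vecE x (amv n A f (yv x)) (tI ℓ)
              + (B (enr (yv x)) ((enr (yv x))^2) (xiArg n f (yv x))
                - Acomp n A f (yv x) * Pnorm f (yv x) ℓ) * x (tI ℓ))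
            + ind (tJ ℓ) j * (vecE x (amv n A f (yv x)) (tJ ℓ)
              + (B (enr (yv x)) ((enr (yv x))^2) (xiArg n f (yv x))
                - Acomp n A f (yv x) * Pnorm f (yv x) ℓ) * x (tJ ℓ))))
        + (if hh : n % 2 = 1 then
            ind (⟨n-1, by omega⟩ : Fin n) j * (vecE x (amv n A f (yv x)) ⟨n-1, by omega⟩
              + B (enr (yv x)) ((enr (yv x))^2) (xiArg n f (yv x)) * x ⟨n-1, by omega⟩)
          else 0) := by
    have hLAB : LAB A B u x j
        = ∑ i, gradm u x i j * ((∑ k, gradm u x i k * vecE x (amv n A f (yv x)) k)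
            + Acomp n A f (yv x) * lapv u x i
            + B (enr (yv x)) ((enr (yv x))^2) (xiArg n f (yv x)) * u x i) := by
      rw [LAB, hgx, hAv, hBv]
      exact matcalc (gradm u x) _ _ _ _ _ j
    rw [hLAB, fin_sum_split (fun i => gradm u x i j
      * ((∑ k, gradm u x i k * vecE x (amv n A f (yv x)) k)
          + Acomp n A f (yv x) * lapv u x i
          + B (enr (yv x)) ((enr (yv x))^2) (xiArg n f (yv x)) * u x i))]
    congr 1
    · refine Finset.sum_congr rfl fun ℓ _ => ?_
      rw [hWtI ℓ, hWtJ ℓ, gradm_row_tI hu hf hx ℓ j, gradm_row_tJ hu hf hx ℓ j, rowc, rowc]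
      linear_combination
        (ind (tI ℓ) j * vecE x (amv n A f (yv x)) (tI ℓ)
          + ind (tJ ℓ) j * vecE x (amv n A f (yv x)) (tJ ℓ)) * hsc ℓ
        + (ind (tI ℓ) j * (B (enr (yv x)) ((enr (yv x))^2) (xiArg n f (yv x))
            - Acomp n A f (yv x) * Pnorm f (yv x) ℓ)) * hcb ℓ
        + (-(ind (tJ ℓ) j * (B (enr (yv x)) ((enr (yv x))^2) (xiArg n f (yv x))
            - Acomp n A f (yv x) * Pnorm f (yv x) ℓ))) * hca ℓ
        + (Vv f x ℓ j * vecE x (amv n A f (yv x)) (tI ℓ)) * hca ℓ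
        + (Vv f x ℓ j * vecE x (amv n A f (yv x)) (tJ ℓ)) * hcb ℓ
        + (Vv f x ℓ j) * hgcross ℓ
    · by_cases hh : n % 2 = 1
      · rw [dif_pos hh, dif_pos hh]
        have hi : ¬(((⟨n-1, by omega⟩ : Fin n):ℕ) < 2*(n/2)) := by
          show ¬(n-1 < 2*(n/2)); omega
        rw [gradm_row_odd hu hi j,
          Finset.sum_congr rfl (fun k _ => by rw [gradm_row_odd hu hi k]),
          sum_ind_mul, lap_odd hu hi, u_odd hu x hi]
        ring
      · rw [dif_neg hh, dif_neg hh]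
  rw [hL]
  -- now the right-hand side
  rw [Pi.sub_apply, Pi.add_apply, Pi.smul_apply, smul_eq_mul, Finset.sum_apply, hgx]
  have h1 : vecE x (amv n A f (yv x)) j
        + B (enr (yv x)) ((enr (yv x))^2) (xiArg n f (yv x)) * x j
      = (∑ ℓ : Fin (n/2),
          (ind (tI ℓ) j * (vecE x (amv n A f (yv x)) (tI ℓ)
              + B (enr (yv x)) ((enr (yv x))^2) (xiArg n f (yv x)) * x (tI ℓ))
            + ind (tJ ℓ) j * (vecE x (amv n A f (yv x)) (tJ ℓ)
              + B (enr (yv x)) ((enr (yv x))^2) (xiArg n f (yv x)) * x (tJ ℓ))))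
        + (if hh : n % 2 = 1 then
            ind (⟨n-1, by omega⟩ : Fin n) j * (vecE x (amv n A f (yv x)) ⟨n-1, by omega⟩
              + B (enr (yv x)) ((enr (yv x))^2) (xiArg n f (yv x)) * x ⟨n-1, by omega⟩)
          else 0) := by
    rw [← fin_sum_split (fun i => ind i j * (vecE x (amv n A f (yv x)) i
        + B (enr (yv x)) ((enr (yv x))^2) (xiArg n f (yv x)) * x i))]
    rw [sum_ind_mul' j]
  have h2 : ∑ ℓ : Fin (n/2),
        ((Acomp n A f (yv x) * norm2 (gradx (fun w => f w ℓ) (yv x))) • wv x (dIdx ℓ)) j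
      = ∑ ℓ : Fin (n/2), (Acomp n A f (yv x) * Pnorm f (yv x) ℓ)
          * (ind (tI ℓ) j * x (tI ℓ) + ind (tJ ℓ) j * x (tJ ℓ)) := by
    refine Finset.sum_congr rfl fun ℓ _ => ?_
    rw [Pi.smul_apply, smul_eq_mul, wv_eq, hPn ℓ]
  rw [h1, h2]
  rw [add_sub_right_comm, ← Finset.sum_sub_distrib]
  congr 1
  refine Finset.sum_congr rfl fun ℓ _ => ?_
  ring
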